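/- arXiv:1912.07891 — 6 statements merged into one kernel-verified Lean document; each statement's English description precedes it below -/
import Mathlib

section
/- If 0 < β < 1 < α and αβ < 1, then there exists a unique κ > 0 such that α^κ + β^κ = 2. -/
set_option maxHeartbeats 1000000

/-- If `0 < β < 1 < α` and `αβ < 1`, then there is a unique `κ > 0` with `α^κ + β^κ = 2`. -/
theorem stmt_1 (α β : ℝ) (hβ0 : 0 < β) (hβ1 : β < 1) (hα : 1 < α) (hαβ : α * β < 1) :
    ∃! κ : ℝ, 0 < κ ∧ α ^ κ + β ^ κ = 2 := by
  have hα0 : (0:ℝ) < α := lt_trans one_pos hα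
  set L := Real.log α with hLdef
  set M := Real.log β with hMdef
  have hL0 : 0 < L := Real.log_pos hα
  have hM0 : M < 0 := Real.log_neg hβ0 hβ1
  have hN : L + M < 0 := by
    have h := Real.log_neg (by positivity) hαβ
    rwa [Real.log_mul (ne_of_gt hα0) (ne_of_gt hβ0)] at h
  have hexpL : Real.exp L = α := Real.exp_log hα0
  have hexpN : Real.exp (L + M) = α * β := by
    rw [Real.exp_add, hexpL, Real.exp_log hβ0]
  have hfg : ∀ s : ℝ, α ^ s + β ^ s = Real.exp (L * s) + Real.exp (M * s) := by
    intro s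
    rw [Real.rpow_def_of_pos hα0, Real.rpow_def_of_pos hβ0]
  -- Key strict convexity fact: a root `b > a > 0` forces `g a < 2` (using `g 0 = 2`).
  have key : ∀ a b : ℝ, 0 < a → a < b →
      Real.exp (L * b) + Real.exp (M * b) = 2 →
      Real.exp (L * a) + Real.exp (M * a) < 2 := by
    intro a b ha hab hgb
    have hb : 0 < b := ha.trans hab
    set t := (b - a) / b with htdef
    set s := a / b with hsdef
    have ht : 0 < t := div_pos (by linarith) hb
    have hs : 0 < s := div_pos ha hb
    have hts : t + s = 1 := by rw [htdef, hsdef, ← add_div, sub_add_cancel, div_self hb.ne']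
    have h1 := strictConvexOn_exp.2 (Set.mem_univ (0:ℝ)) (Set.mem_univ (L * b))
      (ne_of_lt (by positivity)) ht hs hts
    have h2 := strictConvexOn_exp.2 (Set.mem_univ (0:ℝ)) (Set.mem_univ (M * b))
      ((ne_of_lt (mul_neg_of_neg_of_pos hM0 hb)).symm) ht hs hts
    simp only [smul_eq_mul, mul_zero, zero_add, Real.exp_zero, mul_one] at h1 h2
    have hsl : s * (L * b) = L * a := by rw [hsdef, mul_comm L b, ← mul_assoc, div_mul_cancel₀ a hb.ne', mul_comm]
    have hsm : s * (M * b) = M * a := by rw [hsdef, mul_comm M b, ← mul_assoc, div_mul_cancel₀ a hb.ne', mul_comm]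
    rw [hsl] at h1
    rw [hsm] at h2
    nlinarith [h1, h2, hgb, hts]
  -- Existence of a point where the function is `< 2`.
  set s₀ : ℝ := min 1 ((-(L + M)) * (α * β) / (2 * (L * α) ^ 2)) with hs₀def
  have hs₀pos : 0 < s₀ := by
    apply lt_min one_pos
    have : 0 < -(L + M) := by linarith
    positivity
  have hs₀1 : s₀ ≤ 1 := min_le_left _ _
  have hs₀b : s₀ * (L * α) ^ 2 < (-(L + M)) * (α * β) := by
    have h1 : s₀ ≤ (-(L + M)) * (α * β) / (2 * (L * α) ^ 2) := min_le_right _ _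
    have hpos : 0 < (L * α) ^ 2 := by positivity
    have hNpos : 0 < -(L + M) := by linarith
    have habpos : 0 < α * β := by positivity
    rw [le_div_iff₀ (by positivity)] at h1
    nlinarith
  -- bounds
  set u := Real.exp (L * s₀) with hudef
  set c := Real.exp ((L + M) * s₀) with hcdef
  have hu0 : 0 < u := Real.exp_pos _
  have hu1 : 1 ≤ u := Real.one_le_exp (by positivity)
  have hMc : Real.exp (M * s₀) = c / u := by
    rw [hcdef, hudef, eq_div_iff (ne_of_gt (Real.exp_pos _)), ← Real.exp_add]
    ring_nf
  -- u - 1 ≤ L * s₀ * u ≤ L * s₀ * α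
  have hub : u - 1 ≤ L * α * s₀ := by
    have h1 : 1 - L * s₀ ≤ Real.exp (-(L * s₀)) := by
      linarith [Real.add_one_le_exp (-(L * s₀))]
    have h2 : Real.exp (-(L * s₀)) * u = 1 := by
      rw [hudef, ← Real.exp_add]; simp
    have h3 : u ≤ α := by
      rw [← hexpL, hudef]
      exact Real.exp_le_exp.2 (by nlinarith)
    nlinarith [mul_le_mul_of_nonneg_right h1 hu0.le]
  have hub0 : 0 ≤ u - 1 := by linarith
  -- 1 - c ≥ (-(L+M)) * (α*β) * s₀
  have hcb : (-(L + M)) * (α * β) * s₀ ≤ 1 - c := by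
    have h1 : 1 - (L + M) * s₀ ≤ Real.exp (-((L + M) * s₀)) := by
      linarith [Real.add_one_le_exp (-((L + M) * s₀))]
    have h2 : Real.exp (-((L + M) * s₀)) * c = 1 := by
      rw [hcdef, ← Real.exp_add]; simp
    have h3 : α * β ≤ c := by
      rw [← hexpN, hcdef]
      exact Real.exp_le_exp.2 (by nlinarith)
    have hc0 : 0 < c := Real.exp_pos _
    have h4 : 0 ≤ -(L + M) * s₀ := by nlinarith
    nlinarith [mul_le_mul_of_nonneg_right h1 hc0.le,
      mul_le_mul_of_nonneg_left h3 h4]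
  have hgs₀ : Real.exp (L * s₀) + Real.exp (M * s₀) < 2 := by
    rw [hMc]
    have hsq : (u - 1) ^ 2 < 1 - c := by
      have h1 : (u - 1) ^ 2 ≤ (L * α * s₀) ^ 2 := by
        have := pow_le_pow_left₀ hub0 hub 2
        linarith
      have h2 : (L * α * s₀) ^ 2 < (-(L + M)) * (α * β) * s₀ := by
        nlinarith [mul_lt_mul_of_pos_right hs₀b hs₀pos]
      linarith
    have : u * u + c < 2 * u := by nlinarith
    have hdiv : c / u < 2 - u := by
      rw [div_lt_iff₀ hu0]
      nlinarith
    linarith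
  -- Upper point
  set S : ℝ := (Real.log 2 + 1) / L with hSdef
  have hLS : L * S = Real.log 2 + 1 := by
    rw [hSdef]; field_simp
  have hgS : 2 < Real.exp (L * S) + Real.exp (M * S) := by
    have h1 : Real.exp (L * S) = 2 * Real.exp 1 := by
      rw [hLS, Real.exp_add, Real.exp_log two_pos]
    have h2 : 1 < Real.exp 1 := by
      have := Real.add_one_le_exp (1:ℝ)
      linarith
    have h3 : 0 < Real.exp (M * S) := Real.exp_pos _
    nlinarith
  have hs₀S : s₀ ≤ S := by
    by_contra h
    push_neg at h
    have h1 : Real.exp (L * S) ≤ Real.exp (L * s₀) :=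
      Real.exp_le_exp.2 (by nlinarith)
    have h4 : 0 < Real.exp (M * s₀) := Real.exp_pos _
    have h5 : 2 < Real.exp (L * S) := by
      rw [hLS, Real.exp_add, Real.exp_log two_pos]
      nlinarith [Real.add_one_le_exp (1:ℝ)]
    linarith
  -- IVT
  have hcont : ContinuousOn (fun s : ℝ => Real.exp (L * s) + Real.exp (M * s))
      (Set.Icc s₀ S) := by fun_prop
  have hmem : (2 : ℝ) ∈ Set.Icc (Real.exp (L * s₀) + Real.exp (M * s₀))
      (Real.exp (L * S) + Real.exp (M * S)) := ⟨le_of_lt hgs₀, le_of_lt hgS⟩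
  obtain ⟨κ, hκmem, hκeq⟩ := intermediate_value_Icc hs₀S hcont hmem
  have hκpos : 0 < κ := lt_of_lt_of_le hs₀pos hκmem.1
  refine ⟨κ, ⟨hκpos, by rw [hfg]; exact hκeq⟩, ?_⟩
  rintro y ⟨hy0, hy2⟩
  rw [hfg] at hy2
  rcases lt_trichotomy y κ with h | h | h
  · exact absurd hy2 (ne_of_lt (key y κ hy0 h hκeq))
  · exact h
  · exact absurd hκeq (ne_of_lt (key κ y hκpos h hy2))
end

section
/- Let 0 < β ≤ α < 1 and Y_n the stable random-coefficient AR process. For any integer ℓ ≥ 0 and a > 0, P(Y_n ≥ a and θ_n = α, …, θ_{n-ℓ} = α) ≥ 2^{-(ℓ+1)} P(N(0, u_ℓ²) ≥ a), where u_ℓ² = Σ_{k=0}^ℓ α^{2k}. -/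
open MeasureTheory ProbabilityTheory Filter
open scoped ENNReal NNReal

namespace Stmt9Aux

open Real ProbabilityTheory

lemma pdf_conv {v1 v2 : ℝ≥0} (h1 : v1 ≠ 0) (h2 : v2 ≠ 0) (z : ℝ) :
    ∫ x : ℝ, gaussianPDFReal 0 v1 x * gaussianPDFReal 0 v2 (z - x)
      = gaussianPDFReal 0 (v1 + v2) z := by
  have hv1 : (0:ℝ) < v1 := by positivity
  have hv2 : (0:ℝ) < v2 := by positivity
  have hv12 : (0:ℝ) < (v1:ℝ) + v2 := by positivity
  set b : ℝ := ((v1:ℝ) + v2) / (2 * v1 * v2) with hb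
  have hbpos : 0 < b := by positivity
  set c : ℝ := (v1:ℝ) / ((v1:ℝ) + v2) with hc
  set K : ℝ := (Real.sqrt (2 * π * v1))⁻¹ * (Real.sqrt (2 * π * v2))⁻¹
      * Real.exp (- z ^ 2 / (2 * ((v1:ℝ) + v2))) with hK
  have key : ∀ x : ℝ, gaussianPDFReal 0 v1 x * gaussianPDFReal 0 v2 (z - x)
      = K * Real.exp (-b * (x - c * z) ^ 2) := by
    intro x
    simp only [gaussianPDFReal, sub_zero, hK]
    have hexp : Real.exp (- x ^ 2 / (2 * (v1:ℝ)) + - (z - x) ^ 2 / (2 * (v2:ℝ)))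
        = Real.exp (- z ^ 2 / (2 * ((v1:ℝ) + v2))) * Real.exp (-b * (x - c * z) ^ 2) := by
      rw [← Real.exp_add]
      congr 1
      rw [hb, hc]
      field_simp [hv1.ne', hv2.ne', hv12.ne']
      ring
    rw [mul_mul_mul_comm, ← Real.exp_add, hexp]
    ring
  have hcoef : (Real.sqrt (2 * π * v1))⁻¹ * (Real.sqrt (2 * π * v2))⁻¹ * Real.sqrt (π / b)
      = (Real.sqrt (2 * π * ((v1:ℝ) + v2)))⁻¹ := by
    have e1 : Real.sqrt (π / b) = Real.sqrt (2 * π * v1) * Real.sqrt (2 * π * v2)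
        / Real.sqrt (2 * π * ((v1:ℝ) + v2)) := by
      rw [← Real.sqrt_mul (by positivity), ← Real.sqrt_div (by positivity)]
      congr 1
      rw [hb]
      field_simp [hv1.ne', hv2.ne', hv12.ne']
    rw [e1]
    have s1 : Real.sqrt (2 * π * v1) ≠ 0 := by positivity
    have s2 : Real.sqrt (2 * π * v2) ≠ 0 := by positivity
    field_simp
  calc ∫ x : ℝ, gaussianPDFReal 0 v1 x * gaussianPDFReal 0 v2 (z - x)
      = ∫ x : ℝ, K * Real.exp (-b * (x - c * z) ^ 2) := by
        exact integral_congr_ae (Filter.Eventually.of_forall key)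
    _ = K * ∫ x : ℝ, Real.exp (-b * (x - c * z) ^ 2) := by
        rw [integral_const_mul]
    _ = K * Real.sqrt (π / b) := by
        rw [integral_sub_right_eq_self (fun x => Real.exp (-b * x ^ 2)) (c * z),
          integral_gaussian]
    _ = gaussianPDFReal 0 (v1 + v2) z := by
        simp only [gaussianPDFReal, sub_zero, hK, NNReal.coe_add]
        rw [mul_comm _ (Real.sqrt (π/b)), ← mul_assoc, mul_comm (Real.sqrt (π/b)),
          hcoef]


lemma gauss_conv (v1 v2 : ℝ≥0) :
    Measure.map (fun p : ℝ × ℝ => p.1 + p.2)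
      ((gaussianReal 0 v1).prod (gaussianReal 0 v2)) = gaussianReal 0 (v1 + v2) := by
  by_cases h1 : v1 = 0
  · subst h1
    rw [gaussianReal_zero_var, zero_add, Measure.dirac_prod,
      Measure.map_map measurable_add (measurable_prodMk_left)]
    have : (fun p : ℝ × ℝ => p.1 + p.2) ∘ Prod.mk (0:ℝ) = id := by funext x; simp
    rw [this, Measure.map_id]
  by_cases h2 : v2 = 0
  · subst h2
    rw [gaussianReal_zero_var, add_zero, Measure.prod_dirac,
      Measure.map_map measurable_add (measurable_prodMk_right)]
    have : (fun p : ℝ × ℝ => p.1 + p.2) ∘ (fun x : ℝ => (x, (0:ℝ))) = id := by funext x; simp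
    rw [this, Measure.map_id]
  have h12 : v1 + v2 ≠ 0 := by simp [h1]
  ext s hs
  rw [Measure.map_apply measurable_add hs, Measure.prod_apply (measurable_add hs),
    gaussianReal_apply _ h12 s]
  have step1 : ∀ x : ℝ, gaussianReal 0 v2 (Prod.mk x ⁻¹' ((fun p : ℝ × ℝ => p.1 + p.2) ⁻¹' s))
      = ∫⁻ z in s, gaussianPDF x v2 z := by
    intro x
    have hpre : Prod.mk x ⁻¹' ((fun p : ℝ × ℝ => p.1 + p.2) ⁻¹' s) = (fun y => x + y) ⁻¹' s := rfl
    rw [hpre, ← Measure.map_apply (by fun_prop) hs, gaussianReal_map_const_add,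
      zero_add, gaussianReal_apply _ h2 s]
  simp_rw [step1]
  rw [gaussianReal_of_var_ne_zero _ h1,
    lintegral_withDensity_eq_lintegral_mul _ (measurable_gaussianPDF _ _)]
  swap
  · exact Measurable.lintegral_prod_right (f := fun x z => gaussianPDF x v2 z)
      (by unfold gaussianPDF gaussianPDFReal; fun_prop)
  have step2 : ∀ x : ℝ, (gaussianPDF 0 v1 * fun x => ∫⁻ z in s, gaussianPDF x v2 z) x
      = ∫⁻ z in s, ENNReal.ofReal (gaussianPDFReal 0 v1 x * gaussianPDFReal 0 v2 (z - x)) := by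
    intro x
    simp only [Pi.mul_apply]
    rw [← lintegral_const_mul _ (measurable_gaussianPDF x v2)]
    congr 1
    funext z
    simp only [gaussianPDF]
    rw [← ENNReal.ofReal_mul (gaussianPDFReal_nonneg _ _ _)]
    congr 1
    rw [gaussianPDFReal_sub, zero_add]
  simp_rw [step2]
  rw [lintegral_lintegral_swap]
  swap
  · apply Measurable.aemeasurable
    apply Measurable.ennreal_ofReal
    unfold gaussianPDFReal
    fun_prop
  congr 1
  funext z
  rw [← ofReal_integral_eq_lintegral_ofReal]
  · rw [pdf_conv h1 h2 z]; rfl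
  · have hint : Integrable (fun x => gaussianPDFReal 0 v2 (z - x) * gaussianPDFReal 0 v1 x) ℙ := by
      apply Integrable.bdd_mul (c := (Real.sqrt (2 * π * v2))⁻¹) (integrable_gaussianPDFReal 0 v1)
      · apply Continuous.aestronglyMeasurable
        unfold gaussianPDFReal
        fun_prop
      · refine Filter.Eventually.of_forall fun x => ?_
        rw [Real.norm_eq_abs, abs_of_nonneg (gaussianPDFReal_nonneg _ _ _)]
        unfold gaussianPDFReal
        rw [sub_zero]
        have hle : Real.exp (-(z - x)^2 / (2 * v2)) ≤ 1 := by
          rw [Real.exp_le_one_iff]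
          exact div_nonpos_of_nonpos_of_nonneg (neg_nonpos.mpr (sq_nonneg _)) (by positivity)
        calc (Real.sqrt (2 * π * v2))⁻¹ * Real.exp (-(z - x)^2 / (2 * v2))
            ≤ (Real.sqrt (2 * π * v2))⁻¹ * 1 := by
              apply mul_le_mul_of_nonneg_left hle; positivity
          _ = _ := mul_one _
    exact hint.congr (Filter.Eventually.of_forall fun x => mul_comm _ _)
  · exact Filter.Eventually.of_forall fun x =>
      mul_nonneg (gaussianPDFReal_nonneg _ _ _) (gaussianPDFReal_nonneg _ _ _)

lemma indep_gauss_add {Ω : Type*} [MeasureSpace Ω] [IsProbabilityMeasure (ℙ : Measure Ω)]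
    {X Y : Ω → ℝ} {v1 v2 : ℝ≥0} (h : IndepFun X Y ℙ)
    (hXm : Measurable X) (hYm : Measurable Y)
    (hX : Measure.map X ℙ = gaussianReal 0 v1) (hY : Measure.map Y ℙ = gaussianReal 0 v2) :
    Measure.map (fun ω => X ω + Y ω) ℙ = gaussianReal 0 (v1 + v2) := by
  have hmap : Measure.map (fun ω => (X ω, Y ω)) ℙ = (gaussianReal 0 v1).prod (gaussianReal 0 v2) := by
    rw [← hX, ← hY]
    exact (indepFun_iff_map_prod_eq_prod_map_map hXm.aemeasurable hYm.aemeasurable).mp h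
  have : (fun ω => X ω + Y ω) = (fun p : ℝ × ℝ => p.1 + p.2) ∘ (fun ω => (X ω, Y ω)) := rfl
  rw [this, ← Measure.map_map measurable_add (hXm.prodMk hYm), hmap, gauss_conv]

lemma gauss_tail_mono {u v : ℝ≥0} (hu : u ≠ 0) (huv : u ≤ v) {a : ℝ} (ha : 0 ≤ a) :
    gaussianReal 0 u {x | a ≤ x} ≤ gaussianReal 0 v {x | a ≤ x} := by
  set c : ℝ := Real.sqrt ((v : ℝ) / u) with hcdef
  have hu0 : (0:ℝ) < u := by positivity
  have hc1 : 1 ≤ c := by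
    rw [hcdef]
    rw [show (1:ℝ) = Real.sqrt 1 by simp]
    apply Real.sqrt_le_sqrt
    rw [le_div_iff₀ hu0]
    simpa using huv
  have hmap : gaussianReal 0 v = (gaussianReal 0 u).map (c * ·) := by
    rw [gaussianReal_map_const_mul, mul_zero]
    congr 1
    ext
    push_cast
    rw [hcdef, Real.sq_sqrt (by positivity)]
    field_simp
  rw [hmap, Measure.map_apply (by fun_prop) (by
    exact measurableSet_le measurable_const measurable_id)]
  apply measure_mono
  intro x hx
  simp only [Set.mem_setOf_eq, Set.mem_preimage] at *
  calc a ≤ x := hx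
    _ = 1 * x := (one_mul x).symm
    _ ≤ c * x := mul_le_mul_of_nonneg_right hc1 (le_trans ha hx)

lemma sum_gauss {Ω : Type*} [MeasureSpace Ω] [IsProbabilityMeasure (ℙ : Measure Ω)]
    (θ ε : ℕ → Ω → ℝ)
    (hθmeas : ∀ k, Measurable (θ k)) (hεmeas : ∀ k, Measurable (ε k))
    (hindep : iIndepFun
      (Sum.elim θ ε) ℙ)
    (hεlaw : ∀ k, 1 ≤ k → Measure.map (ε k) ℙ = gaussianReal 0 1)
    (c : ℕ → ℝ) (s : Finset ℕ) (hs : ∀ k ∈ s, 1 ≤ k) :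
    Measure.map (fun ω => ∑ k ∈ s, c k * ε k ω) ℙ
      = gaussianReal 0 (Real.toNNReal (∑ k ∈ s, (c k)^2)) := by
  classical
  set f' : ℕ ⊕ ℕ → Ω → ℝ := fun i => Sum.elim θ (fun k ω => c k * ε k ω) i with hf'
  have hindep' : iIndepFun f' ℙ := by
    have h := hindep.comp (fun i => Sum.elim (fun _ : ℕ => (id : ℝ → ℝ))
      (fun k (x : ℝ) => c k * x) i) (by
        rintro (j | k)
        · exact measurable_id
        · show Measurable fun x : ℝ => c k * x
          fun_prop)
    convert h using 1
    funext i
    cases i <;> rfl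
  have hmeas' : ∀ i, Measurable (f' i) := by
    rintro (j | k)
    · exact hθmeas j
    · exact (hεmeas k).const_mul _
  revert hs
  induction s using Finset.induction_on with
  | empty =>
    intro _
    simp only [Finset.sum_empty]
    rw [Measure.map_const, measure_univ, one_smul, Real.toNNReal_zero, gaussianReal_zero_var]
  | @insert j t hjt ih =>
    intro hs
    have h1j : 1 ≤ j := hs j (Finset.mem_insert_self j t)
    have hst : ∀ k ∈ t, 1 ≤ k := fun k hk => hs k (Finset.mem_insert_of_mem hk)
    have hind : IndepFun (fun ω => ∑ k ∈ t, c k * ε k ω) (fun ω => c j * ε j ω) ℙ := by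
      have h := hindep'.indepFun_finsetSum_of_notMem hmeas'
        (s := t.map ⟨Sum.inr, Sum.inr_injective⟩) (i := Sum.inr j)
        (by simp [hjt])
      have he : (∑ i ∈ t.map ⟨Sum.inr, Sum.inr_injective⟩, f' i)
          = fun ω => ∑ k ∈ t, c k * ε k ω := by
        rw [Finset.sum_map]
        funext ω
        rw [Finset.sum_apply]
        rfl
      rw [he] at h
      exact h
    have hlawj : Measure.map (fun ω => c j * ε j ω) ℙ
        = gaussianReal 0 (Real.toNNReal ((c j)^2)) := by
      have h : Measure.map (fun ω => c j * ε j ω) ℙ = (Measure.map (ε j) ℙ).map (c j * ·) :=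
        (Measure.map_map (by fun_prop) (hεmeas j)).symm
      rw [hεlaw j h1j, gaussianReal_map_const_mul, mul_zero] at h
      convert h using 2
      ext
      simp [Real.coe_toNNReal _ (sq_nonneg (c j))]
    have hsum : (fun ω => ∑ k ∈ insert j t, c k * ε k ω)
        = fun ω => (∑ k ∈ t, c k * ε k ω) + c j * ε j ω := by
      funext ω
      rw [Finset.sum_insert hjt]
      ring
    rw [hsum, Finset.sum_insert hjt,
      indep_gauss_add hind (by fun_prop) (by fun_prop) (ih hst) hlawj]
    congr 1
    rw [← Real.toNNReal_add (Finset.sum_nonneg fun k _ => sq_nonneg _) (sq_nonneg _), add_comm]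

end Stmt9Aux

open Stmt9Aux

/-- Lower bound in the strictly stable case `0 < β ≤ α < 1`: for `ℓ < n` and `a > 0`,
`P(Y_n ≥ a, θ_n = α, …, θ_{n-ℓ} = α) ≥ 2^{-(ℓ+1)} P(N(0, u_ℓ²) ≥ a)` where
`u_ℓ² = Σ_{k=0}^ℓ α^{2k}`. -/
theorem stmt_9
    {Ω : Type*} [MeasureSpace Ω] [IsProbabilityMeasure (ℙ : Measure Ω)]
    (α β : ℝ) (hβ : 0 < β) (hβα : β ≤ α) (hα : α < 1)
    (θ ε : ℕ → Ω → ℝ)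
    (hθmeas : ∀ k, Measurable (θ k)) (hεmeas : ∀ k, Measurable (ε k))
    (hindep : iIndepFun
      (Sum.elim θ ε) ℙ)
    (hθlaw : ∀ k, 1 ≤ k → Measure.map (θ k) ℙ
      = (1 / 2 : ℝ≥0∞) • Measure.dirac α + (1 / 2 : ℝ≥0∞) • Measure.dirac β)
    (hεlaw : ∀ k, 1 ≤ k → Measure.map (ε k) ℙ = gaussianReal 0 1)
    (Y : ℕ → Ω → ℝ)
    (hY : ∀ n ω, Y n ω = ∑ k ∈ Finset.Icc 1 n,
      (∏ ℓ ∈ Finset.Icc (k + 1) n, θ ℓ ω) * ε k ω)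
    (n ℓ : ℕ) (hℓ : ℓ < n) (a : ℝ) (ha : 0 < a) :
    ((1 : ℝ≥0∞) / 2) ^ (ℓ + 1)
        * gaussianReal 0 (Real.toNNReal (∑ k ∈ Finset.range (ℓ + 1), α ^ (2 * k)))
          {x | a ≤ x}
      ≤ ℙ {ω | a ≤ Y n ω ∧ ∀ j ∈ Finset.Icc (n - ℓ) n, θ j ω = α} := by
  classical
  have hα0 : 0 < α := lt_of_lt_of_le hβ hβα
  set m : ℕ := n - ℓ with hm
  have hm1 : 1 ≤ m := by omega
  have hmn : m ≤ n := by omega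
  set u : ℝ := ∑ k ∈ Finset.range (ℓ + 1), α ^ (2 * k) with hu
  have hu1 : (1:ℝ) ≤ u := by
    rw [hu]
    calc (1:ℝ) = α ^ (2 * 0) := by norm_num
      _ ≤ _ := Finset.single_le_sum (f := fun k => α ^ (2 * k))
          (fun k _ => by positivity) (Finset.mem_range.mpr (Nat.succ_pos ℓ))
  have huNN : Real.toNNReal u ≠ 0 := by
    simp only [ne_eq, Real.toNNReal_eq_zero, not_le]
    linarith
  set G : ℝ≥0∞ := gaussianReal 0 (Real.toNNReal u) {x | a ≤ x} with hG
  have hFmeas : ∀ i : ℕ ⊕ ℕ, Measurable (Sum.elim θ ε i) := by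
    rintro (j | k); exacts [hθmeas j, hεmeas k]
  set S : Finset (ℕ ⊕ ℕ) := (Finset.Icc 1 n).map ⟨Sum.inl, Sum.inl_injective⟩ with hS
  set T : Finset (ℕ ⊕ ℕ) := (Finset.Icc 1 n).map ⟨Sum.inr, Sum.inr_injective⟩ with hT
  set Θv : Ω → (S → ℝ) := fun ω (i : S) => Sum.elim θ ε i ω with hΘv
  set Ev : Ω → (T → ℝ) := fun ω (i : T) => Sum.elim θ ε i ω with hEv
  have hΘvmeas : Measurable Θv := measurable_pi_lambda _ fun i => hFmeas i
  have hEvmeas : Measurable Ev := measurable_pi_lambda _ fun i => hFmeas i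
  set tf : (↥S → ℝ) → ℕ → ℝ :=
    fun t j => if h : Sum.inl j ∈ S then t ⟨Sum.inl j, h⟩ else 0 with htf_def
  set ef : (↥T → ℝ) → ℕ → ℝ :=
    fun e k => if h : Sum.inr k ∈ T then e ⟨Sum.inr k, h⟩ else 0 with hef_def
  have htfmeas : ∀ j, Measurable fun t => tf t j := by
    intro j
    by_cases h : Sum.inl j ∈ S
    · simp only [htf_def, dif_pos h]; exact measurable_pi_apply _
    · simp only [htf_def, dif_neg h]; exact measurable_const
  have hefmeas : ∀ k, Measurable fun e => ef e k := by
    intro k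
    by_cases h : Sum.inr k ∈ T
    · simp only [hef_def, dif_pos h]; exact measurable_pi_apply _
    · simp only [hef_def, dif_neg h]; exact measurable_const
  have htf_eval : ∀ j, j ∈ Finset.Icc 1 n → ∀ ω, tf (Θv ω) j = θ j ω := by
    intro j hj ω
    have h : Sum.inl j ∈ S := by
      rw [hS, Finset.mem_map]; exact ⟨j, hj, rfl⟩
    simp only [htf_def, dif_pos h, hΘv]
    rfl
  have hef_eval : ∀ k, k ∈ Finset.Icc 1 n → ∀ ω, ef (Ev ω) k = ε k ω := by
    intro k hk ω
    have h : Sum.inr k ∈ T := by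
      rw [hT, Finset.mem_map]; exact ⟨k, hk, rfl⟩
    simp only [hef_def, dif_pos h, hEv]
    rfl
  set f : (↥S → ℝ) × (↥T → ℝ) → ℝ :=
    fun p => ∑ k ∈ Finset.Icc 1 n,
      (∏ j ∈ Finset.Icc (k + 1) n, tf p.1 j) * ef p.2 k with hf_def
  have hfmeas : Measurable f := by
    apply Finset.measurable_sum
    intro k _
    exact ((Finset.measurable_prod _ fun j _ =>
      (htfmeas j).comp measurable_fst)).mul ((hefmeas k).comp measurable_snd)
  set C : Set ((↥S → ℝ) × (↥T → ℝ)) :=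
    {p | a ≤ f p} ∩ ⋂ j ∈ Finset.Icc m n, {p | tf p.1 j = α} with hC_def
  have hCmeas : MeasurableSet C := by
    apply MeasurableSet.inter
    · exact measurableSet_le measurable_const hfmeas
    · exact MeasurableSet.biInter (Finset.Icc m n).countable_toSet fun j _ =>
        ((htfmeas j).comp measurable_fst) (measurableSet_singleton α)
  have hYf : ∀ ω, f (Θv ω, Ev ω) = Y n ω := by
    intro ω
    rw [hY n ω, hf_def]
    apply Finset.sum_congr rfl
    intro k hk
    rw [hef_eval k hk ω]
    congr 1
    apply Finset.prod_congr rfl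
    intro j hj
    apply htf_eval
    rw [Finset.mem_Icc] at *
    omega
  have hevent : {ω | a ≤ Y n ω ∧ ∀ j ∈ Finset.Icc m n, θ j ω = α}
      = (fun ω => (Θv ω, Ev ω)) ⁻¹' C := by
    ext ω
    simp only [Set.mem_setOf_eq, Set.mem_preimage, hC_def, Set.mem_inter_iff,
      Set.mem_iInter, Set.mem_setOf_eq]
    constructor
    · rintro ⟨h1, h2⟩
      refine ⟨by rw [hYf ω]; exact h1, fun j hj => ?_⟩
      rw [htf_eval j (by rw [Finset.mem_Icc] at *; omega) ω]
      exact h2 j hj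
    · rintro ⟨h1, h2⟩
      refine ⟨by rw [← hYf ω]; exact h1, fun j hj => ?_⟩
      rw [← htf_eval j (by rw [Finset.mem_Icc] at *; omega) ω]
      exact h2 j hj
  have hST : Disjoint S T := by
    rw [Finset.disjoint_left]
    rintro x hxS hxT
    rw [hS, Finset.mem_map] at hxS
    rw [hT, Finset.mem_map] at hxT
    obtain ⟨j, _, rfl⟩ := hxS
    obtain ⟨k, _, h⟩ := hxT
    exact absurd h (by simp)
  have hprod : Measure.map (fun ω => (Θv ω, Ev ω)) ℙ
      = (Measure.map Θv ℙ).prod (Measure.map Ev ℙ) :=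
    (indepFun_iff_map_prod_eq_prod_map_map hΘvmeas.aemeasurable hEvmeas.aemeasurable).mp
      (hindep.indepFun_finset S T hST hFmeas)
  set E' : Set (↥S → ℝ) := ⋂ j ∈ Finset.Icc m n, {t | tf t j = α} with hE'_def
  have hE'meas : MeasurableSet E' :=
    MeasurableSet.biInter (Finset.Icc m n).countable_toSet fun j _ =>
      (htfmeas j) (measurableSet_singleton α)
  -- core bound : for t ∈ E', G ≤ (map Ev ℙ) (Prod.mk t ⁻¹' C)
  have hcore : ∀ t ∈ E', G ≤ (Measure.map Ev ℙ) (Prod.mk t ⁻¹' C) := by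
    intro t ht
    have hpre : Prod.mk t ⁻¹' C = {e | a ≤ f (t, e)} := by
      ext e
      simp only [Set.mem_preimage, hC_def, Set.mem_inter_iff, Set.mem_iInter,
        Set.mem_setOf_eq]
      constructor
      · exact fun h => h.1
      · intro h
        refine ⟨h, fun j hj => ?_⟩
        rw [hE'_def, Set.mem_iInter] at ht
        have := Set.mem_iInter.mp (ht j) hj
        exact this
    rw [hpre]
    set cf : ℕ → ℝ := fun k => ∏ j ∈ Finset.Icc (k + 1) n, tf t j with hcf
    have hmeas_sum : Measurable fun e => ∑ k ∈ Finset.Icc 1 n, cf k * ef e k :=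
      Finset.measurable_sum _ fun k _ => (hefmeas k).const_mul _
    have hset : {e | a ≤ f (t, e)} = (fun e => ∑ k ∈ Finset.Icc 1 n, cf k * ef e k) ⁻¹' {x | a ≤ x} := by
      rfl
    rw [hset, show {x : ℝ | a ≤ x} = Set.Ici a from rfl,
      ← Measure.map_apply hmeas_sum measurableSet_Ici,
      Measure.map_map hmeas_sum hEvmeas]
    have hcomp : (fun e => ∑ k ∈ Finset.Icc 1 n, cf k * ef e k) ∘ Ev
        = fun ω => ∑ k ∈ Finset.Icc 1 n, cf k * ε k ω := by
      funext ω
      simp only [Function.comp_apply]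
      exact Finset.sum_congr rfl fun k hk => by rw [hef_eval k hk ω]
    rw [show (fun e => ∑ k ∈ Finset.Icc 1 n, cf k * ef e k) ∘ Ev
        = fun ω => ∑ k ∈ Finset.Icc 1 n, cf k * ε k ω from hcomp,
      sum_gauss θ ε hθmeas hεmeas hindep hεlaw cf (Finset.Icc 1 n)
      (fun k hk => (Finset.mem_Icc.mp hk).1)]
    apply gauss_tail_mono huNN _ ha.le
    apply Real.toNNReal_mono
    -- u ≤ ∑ k ∈ Icc 1 n, (cf k)^2
    have hval : ∀ k ∈ Finset.Icc m n, (cf k)^2 = α ^ (2 * (n - k)) := by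
      intro k hk
      rw [Finset.mem_Icc] at hk
      have : cf k = α ^ (n - k) := by
        show (∏ j ∈ Finset.Icc (k + 1) n, tf t j) = α ^ (n - k)
        have hconst : ∀ j ∈ Finset.Icc (k + 1) n, tf t j = α := by
          intro j hj
          rw [Finset.mem_Icc] at hj
          rw [hE'_def, Set.mem_iInter] at ht
          exact Set.mem_iInter.mp (ht j) (Finset.mem_Icc.mpr (by omega))
        rw [Finset.prod_congr rfl hconst, Finset.prod_const, Nat.card_Icc]
        congr 1
        omega
      rw [this, ← pow_mul, Nat.mul_comm]
    calc u = ∑ k ∈ Finset.Icc m n, (cf k)^2 := by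
          rw [Finset.sum_congr rfl hval, hu]
          refine Finset.sum_nbij' (i := fun i => n - i) (j := fun k => n - k)
            ?_ ?_ ?_ ?_ ?_
          · intro i hi; simp only [Finset.mem_Icc, Finset.mem_range] at *; omega
          · intro k hk; simp only [Finset.mem_Icc, Finset.mem_range] at *; omega
          · intro i hi; simp only [Finset.mem_range] at hi; beta_reduce; omega
          · intro k hk; simp only [Finset.mem_Icc] at hk; beta_reduce; omega
          · intro i hi; simp only [Finset.mem_range] at hi; beta_reduce; congr 1; omega
      _ ≤ ∑ k ∈ Finset.Icc 1 n, (cf k)^2 := by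
          apply Finset.sum_le_sum_of_subset_of_nonneg
          · intro x hx; rw [Finset.mem_Icc] at *; omega
          · intro k _ _; positivity
  -- probability of E'
  have hPE : ((1 : ℝ≥0∞) / 2) ^ (ℓ + 1) ≤ (Measure.map Θv ℙ) E' := by
    rw [Measure.map_apply hΘvmeas hE'meas]
    have hpre : Θv ⁻¹' E' = ⋂ j ∈ Finset.Icc m n, θ j ⁻¹' {α} := by
      ext ω
      simp only [Set.mem_preimage, hE'_def, Set.mem_iInter, Set.mem_setOf_eq,
        Set.mem_singleton_iff]
      constructor
      · intro h j hj
        rw [← htf_eval j (by rw [Finset.mem_Icc] at *; omega) ω]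
        exact h j hj
      · intro h j hj
        rw [htf_eval j (by rw [Finset.mem_Icc] at *; omega) ω]
        exact h j hj
    rw [hpre]
    have hmul := hindep.measure_inter_preimage_eq_mul
      ((Finset.Icc m n).map ⟨Sum.inl, Sum.inl_injective⟩)
      (sets := fun i => Sum.elim (fun _ => ({α} : Set ℝ)) (fun _ => Set.univ) i)
      (fun i _ => by rcases i with j | k
                     · exact measurableSet_singleton α
                     · exact MeasurableSet.univ)
    have hiInter : (⋂ i ∈ (Finset.Icc m n).map ⟨Sum.inl, Sum.inl_injective⟩,
        Sum.elim θ ε i ⁻¹' Sum.elim (fun _ => ({α} : Set ℝ)) (fun _ => Set.univ) i)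
        = ⋂ j ∈ Finset.Icc m n, θ j ⁻¹' {α} := by
      ext ω
      simp only [Set.mem_iInter, Finset.mem_map, Function.Embedding.coeFn_mk]
      constructor
      · intro h j hj
        exact h (Sum.inl j) ⟨j, hj, rfl⟩
      · rintro h i ⟨j, hj, rfl⟩
        exact h j hj
    rw [hiInter, Finset.prod_map] at hmul
    rw [hmul]
    have hcard : (Finset.Icc m n).card = ℓ + 1 := by
      rw [Nat.card_Icc]; omega
    calc ((1 : ℝ≥0∞) / 2) ^ (ℓ + 1)
        = ∏ _j ∈ Finset.Icc m n, ((1 : ℝ≥0∞) / 2) := by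
          rw [Finset.prod_const, hcard]
      _ ≤ _ := by
          apply Finset.prod_le_prod'
          intro j hj
          rw [Finset.mem_Icc] at hj
          have h1j : 1 ≤ j := by omega
          show (1 : ℝ≥0∞) / 2 ≤ ℙ (Sum.elim θ ε (Sum.inl j) ⁻¹'
            Sum.elim (fun _ => ({α} : Set ℝ)) (fun _ => Set.univ) (Sum.inl j))
          have : ℙ (θ j ⁻¹' {α}) = (Measure.map (θ j) ℙ) {α} :=
            (Measure.map_apply (hθmeas j) (measurableSet_singleton α)).symm
          show (1 : ℝ≥0∞) / 2 ≤ ℙ (θ j ⁻¹' {α})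
          rw [this, hθlaw j h1j]
          rw [Measure.add_apply, Measure.smul_apply, Measure.smul_apply,
            Measure.dirac_apply_of_mem (Set.mem_singleton α)]
          simp only [smul_eq_mul, mul_one]
          exact le_add_right (le_refl _)
  -- main chain
  show ((1 : ℝ≥0∞) / 2) ^ (ℓ + 1) * G ≤ _
  calc ((1 : ℝ≥0∞) / 2) ^ (ℓ + 1) * G
      ≤ (Measure.map Θv ℙ) E' * G := mul_le_mul_left hPE G
    _ = ∫⁻ t, E'.indicator (fun _ => G) t ∂(Measure.map Θv ℙ) := by
        rw [lintegral_indicator hE'meas, setLIntegral_const, mul_comm]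
    _ ≤ ∫⁻ t, (Measure.map Ev ℙ) (Prod.mk t ⁻¹' C) ∂(Measure.map Θv ℙ) := by
        apply lintegral_mono
        intro t
        by_cases ht : t ∈ E'
        · rw [Set.indicator_of_mem ht]
          exact hcore t ht
        · rw [Set.indicator_of_notMem ht]
          exact zero_le
    _ = ((Measure.map Θv ℙ).prod (Measure.map Ev ℙ)) C := (Measure.prod_apply hCmeas).symm
    _ = ℙ {ω | a ≤ Y n ω ∧ ∀ j ∈ Finset.Icc m n, θ j ω = α} := by
        rw [← hprod, hevent,
          ← Measure.map_apply (hΘvmeas.prodMk hEvmeas) hCmeas]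
end

section
/- Many-to-one formula for the bifurcating autoregressive process: for all n ≥ 0 and all real a ≤ b, E[Z_n([a,b])] = 2^n P(Y_n ∈ [a,b]), where Z_n = Σ_{i ∈ G_n} δ_{X_i} and Y is the autoregressive process along a uniform random lineage. -/
open MeasureTheory ProbabilityTheory Filter
open scoped ENNReal

/-- The centered bivariate Gaussian measure on `ℝ × ℝ` with unit marginal variances and
correlation `ρ`, realized as the image of two independent standard Gaussians. -/
noncomputable def gaussian2 (ρ : ℝ) : Measure (ℝ × ℝ) :=
  Measure.map (fun p : ℝ × ℝ => (p.1, ρ * p.1 + Real.sqrt (1 - ρ ^ 2) * p.2))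
    ((gaussianReal 0 1).prod (gaussianReal 0 1))

section AuxLemmas

open Real
open scoped NNReal

variable {Ω' : Type*} {mΩ' : MeasurableSpace Ω'} {μ' : Measure Ω'}

lemma aux_indep_sup [IsProbabilityMeasure μ'] {A B C : MeasurableSpace Ω'}
    (hA : A ≤ mΩ') (hB : B ≤ mΩ') (hC : C ≤ mΩ')
    (h1 : Indep A (B ⊔ C) μ') (h2 : Indep B C μ') :
    Indep (A ⊔ B) C μ' := by
  have h1' := (Indep_iff _ _ _).1 h1
  have h2' := (Indep_iff _ _ _).1 h2
  refine IndepSets.indep (sup_le hA hB) hC ?_ ?_ ?_ ?_ ?_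
    (p1 := {s | ∃ a b, MeasurableSet[A] a ∧ MeasurableSet[B] b ∧ s = a ∩ b})
    (p2 := {s | MeasurableSet[C] s})
  · rintro s ⟨a, b, ha, hb, rfl⟩ t ⟨a', b', ha', hb', rfl⟩ -
    exact ⟨a ∩ a', b ∩ b', ha.inter ha', hb.inter hb', by ext ω; simp; tauto⟩
  · exact fun s hs t ht _ => hs.inter ht
  · refine le_antisymm (sup_le ?_ ?_) (MeasurableSpace.generateFrom_le ?_)
    · nth_rewrite 1 [← @MeasurableSpace.generateFrom_measurableSet Ω' A]
      refine MeasurableSpace.generateFrom_mono fun s hs => ⟨s, Set.univ, hs, MeasurableSet.univ,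
        (Set.inter_univ s).symm⟩
    · nth_rewrite 1 [← @MeasurableSpace.generateFrom_measurableSet Ω' B]
      refine MeasurableSpace.generateFrom_mono fun s hs => ⟨Set.univ, s, MeasurableSet.univ, hs,
        (Set.univ_inter s).symm⟩
    · rintro s ⟨a, b, ha, hb, rfl⟩
      exact ((le_sup_left : A ≤ A ⊔ B) a ha).inter ((le_sup_right : B ≤ A ⊔ B) b hb)
  · exact (@MeasurableSpace.generateFrom_measurableSet Ω' C).symm
  · rw [IndepSets_iff]
    rintro s t ⟨a, b, ha, hb, rfl⟩ htC
    have hbBC : MeasurableSet[B ⊔ C] b := (le_sup_left : B ≤ B ⊔ C) b hb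
    have htBC : MeasurableSet[B ⊔ C] t := (le_sup_right : C ≤ B ⊔ C) t htC
    have e1 : μ' (a ∩ b ∩ t) = μ' a * μ' (b ∩ t) := by
      rw [Set.inter_assoc]; exact h1' a (b ∩ t) ha (hbBC.inter htBC)
    rw [e1, h2' b t hb htC, h1' a b ha hbBC, mul_assoc]

lemma aux_smul_prod' (c : ℝ≥0∞) (hc : c ≠ ⊤) {α β : Type*} [MeasurableSpace α] [MeasurableSpace β]
    (μ : Measure α) [IsFiniteMeasure μ] (ν : Measure β) [SigmaFinite ν] :
    (c • μ).prod ν = c • (μ.prod ν) := by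
  haveI : IsFiniteMeasure (c • μ) := by
    constructor
    simp only [Measure.smul_apply, smul_eq_mul]
    exact ENNReal.mul_lt_top hc.lt_top (measure_lt_top μ _)
  refine Measure.prod_eq fun s t hs ht => ?_
  simp [Measure.smul_apply, Measure.prod_prod, mul_assoc]

lemma aux_prod_smul (c : ℝ≥0∞) (hc : c ≠ ⊤) {α β : Type*} [MeasurableSpace α] [MeasurableSpace β]
    (μ : Measure α) [SigmaFinite μ] (ν : Measure β) [IsFiniteMeasure ν] :
    μ.prod (c • ν) = c • (μ.prod ν) := by
  haveI : IsFiniteMeasure (c • ν) := by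
    constructor
    simp only [Measure.smul_apply, smul_eq_mul]
    exact ENNReal.mul_lt_top hc.lt_top (measure_lt_top ν _)
  refine Measure.prod_eq fun s t hs ht => ?_
  simp only [Measure.smul_apply, Measure.prod_prod, smul_eq_mul]
  ring

lemma aux_sum_double {M : Type*} [AddCommMonoid M] (f : ℕ → M) :
    ∀ N, ∑ i ∈ Finset.range (2 * N), f i = ∑ k ∈ Finset.range N, (f (2 * k) + f (2 * k + 1))
  | 0 => by simp
  | (N + 1) => by
    rw [show 2 * (N + 1) = 2 * N + 1 + 1 from by ring, Finset.sum_range_succ,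
      Finset.sum_range_succ, Finset.sum_range_succ, aux_sum_double f N, add_assoc]

lemma aux_pdf_swap {ρ s : ℝ} (h : ρ ^ 2 + s ^ 2 = 1) (hs : s ≠ 0)
    {V : ℝ≥0} (hV : (V : ℝ) = s ^ 2) (x t : ℝ) :
    gaussianPDFReal 0 1 x * gaussianPDFReal (ρ * x) V t
      = gaussianPDFReal 0 1 t * gaussianPDFReal (ρ * t) V x := by
  simp only [gaussianPDFReal, hV]
  rw [mul_mul_mul_comm, ← Real.exp_add, mul_mul_mul_comm, ← Real.exp_add]
  congr 1
  have hsub : s ^ 2 = 1 - ρ ^ 2 := by linarith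
  have hs2 : (1:ℝ) - ρ ^ 2 ≠ 0 := hsub ▸ pow_ne_zero 2 hs
  rw [hsub]
  field_simp
  simp only [NNReal.coe_one]
  ring

lemma aux_pdf_swap' {ρ s : ℝ} (h : ρ ^ 2 + s ^ 2 = 1) (hs : s ≠ 0)
    {V : ℝ≥0} (hV : (V : ℝ) = s ^ 2) (x t : ℝ) :
    gaussianPDF 0 1 x * gaussianPDF (ρ * x) V t
      = gaussianPDF 0 1 t * gaussianPDF (ρ * t) V x := by
  simp only [gaussianPDF]
  rw [← ENNReal.ofReal_mul (gaussianPDFReal_nonneg _ _ _),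
    ← ENNReal.ofReal_mul (gaussianPDFReal_nonneg _ _ _), aux_pdf_swap h hs hV]

lemma aux_conv {ρ s : ℝ} (h : ρ ^ 2 + s ^ 2 = 1) (hs : s ≠ 0) :
    Measure.map (fun p : ℝ × ℝ => ρ * p.1 + s * p.2)
      ((gaussianReal 0 1).prod (gaussianReal 0 1)) = gaussianReal 0 1 := by
  set V : ℝ≥0 := ⟨s ^ 2, sq_nonneg s⟩ with hVdef
  have hV : (V : ℝ) = s ^ 2 := rfl
  have hV0 : V ≠ 0 := by
    intro hc
    exact pow_ne_zero 2 hs (by rw [← hV, hc, NNReal.coe_zero])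
  have hmap1 : ∀ x : ℝ, Measure.map (fun y => ρ * x + s * y) (gaussianReal 0 1)
      = gaussianReal (ρ * x) V := by
    intro x
    have hcomp : (fun y => ρ * x + s * y) = (fun z => z + ρ * x) ∘ (fun y => s * y) := by
      funext y; simp [add_comm]
    rw [hcomp, ← Measure.map_map (by fun_prop) (by fun_prop)]
    rw [show (fun y : ℝ => s * y) = (s * ·) from rfl, gaussianReal_map_const_mul s,
      show (fun z : ℝ => z + ρ * x) = (· + ρ * x) from rfl, gaussianReal_map_add_const]
    congr 1
    · ring
    · ext : 1; simp [hV]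
  have hfm : Measurable (fun p : ℝ × ℝ => ρ * p.1 + s * p.2) := by fun_prop
  have hpdfm : Measurable fun q : ℝ × ℝ => gaussianPDF 0 1 q.1 * gaussianPDF (ρ * q.1) V q.2 := by
    refine Measurable.mul (f := fun q : ℝ × ℝ => gaussianPDF 0 1 q.1)
      (g := fun q : ℝ × ℝ => gaussianPDF (ρ * q.1) V q.2) ?_ ?_
    · exact (measurable_gaussianPDF 0 1).comp measurable_fst
    · simp only [gaussianPDF, gaussianPDFReal]
      apply Measurable.ennreal_ofReal
      fun_prop
  ext u hu
  rw [Measure.map_apply hfm hu, Measure.prod_apply (hfm hu)]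
  have step1 : ∀ x : ℝ,
      (gaussianReal 0 1) (Prod.mk x ⁻¹' ((fun p : ℝ × ℝ => ρ * p.1 + s * p.2) ⁻¹' u))
        = ∫⁻ t in u, gaussianPDF (ρ * x) V t := by
    intro x
    have hpre : Prod.mk x ⁻¹' ((fun p : ℝ × ℝ => ρ * p.1 + s * p.2) ⁻¹' u)
        = (fun y => ρ * x + s * y) ⁻¹' u := rfl
    rw [hpre, ← Measure.map_apply (by fun_prop) hu, hmap1 x, gaussianReal_apply _ hV0]
  simp_rw [step1]
  have hG : Measurable fun x : ℝ => ∫⁻ t in u, gaussianPDF (ρ * x) V t :=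
    Measurable.lintegral_prod_right (f := fun x t => gaussianPDF (ρ * x) V t)
      (by simp only [gaussianPDF, gaussianPDFReal]
          exact Measurable.ennreal_ofReal (by fun_prop))
  have main : ∫⁻ x, (∫⁻ t in u, gaussianPDF (ρ * x) V t) ∂(gaussianReal 0 1)
      = ∫⁻ t in u, gaussianPDF 0 1 t := by
    rw [gaussianReal_of_var_ne_zero 0 one_ne_zero,
      lintegral_withDensity_eq_lintegral_mul _ (measurable_gaussianPDF 0 1) hG]
    simp only [Pi.mul_apply]
    simp_rw [← lintegral_const_mul _ (measurable_gaussianPDF _ V)]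
    rw [lintegral_lintegral_swap (by exact hpdfm.aemeasurable)]
    congr 1
    funext t
    simp_rw [aux_pdf_swap' h hs hV]
    rw [lintegral_const_mul _ (measurable_gaussianPDF _ V),
      lintegral_gaussianPDF_eq_one (ρ * t) hV0, mul_one]
  rw [main, ← gaussianReal_apply 0 one_ne_zero u, gaussianReal_of_var_ne_zero 0 one_ne_zero]

/-- The transition operator of the AR recursion: law of `c * x + e` with `e` standard normal. -/
noncomputable def Tc (c : ℝ) (μ : Measure ℝ) : Measure ℝ :=
  Measure.map (fun p : ℝ × ℝ => c * p.1 + p.2) (μ.prod (gaussianReal 0 1))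

lemma Tc_meas (c : ℝ) : Measurable (fun p : ℝ × ℝ => c * p.1 + p.2) := by fun_prop

lemma Tc_zero (c : ℝ) : Tc c 0 = 0 := by simp [Tc]

lemma Tc_add (c : ℝ) (μ₁ μ₂ : Measure ℝ) [SFinite μ₁] [SFinite μ₂] :
    Tc c (μ₁ + μ₂) = Tc c μ₁ + Tc c μ₂ := by
  rw [Tc, Measure.add_prod, Measure.map_add _ _ (Tc_meas c)]; rfl

lemma Tc_smul (c : ℝ) (r : ℝ≥0∞) (hr : r ≠ ⊤) (μ : Measure ℝ) [IsFiniteMeasure μ] :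
    Tc c (r • μ) = r • Tc c μ := by
  rw [Tc, aux_smul_prod' r hr, Measure.map_smul]; rfl

lemma Tc_sum (c : ℝ) (s : Finset ℕ) (g : ℕ → Measure ℝ) [∀ i, IsProbabilityMeasure (g i)] :
    Tc c (∑ i ∈ s, g i) = ∑ i ∈ s, Tc c (g i) := by
  classical
  induction s using Finset.induction with
  | empty => simp [Tc_zero]
  | insert a s hni ih =>
    haveI : SFinite (∑ i ∈ s, g i) := by
      haveI : IsFiniteMeasure (∑ i ∈ s, g i) := by
        constructor
        simp only [Measure.finset_sum_apply]
        exact ENNReal.sum_lt_top.2 fun i _ => measure_lt_top _ _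
      infer_instance
    rw [Finset.sum_insert hni, Tc_add, ih, Finset.sum_insert hni]

end AuxLemmas
set_option maxHeartbeats 1000000 in
/-- Many-to-one formula for the bifurcating autoregressive process:
`E[Z_n([a,b])] = 2^n P(Y_n ∈ [a,b])`. -/
theorem stmt_10
    {Ω : Type*} [MeasureSpace Ω] [IsProbabilityMeasure (ℙ : Measure Ω)]
    (α β ρ : ℝ) (hρ : ρ ∈ Set.Ioo (-1 : ℝ) 1) (hα : 0 ≤ α) (hβ : 0 ≤ β)
    -- the BAR process X with noise η
    (X η : ℕ → Ω → ℝ)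
    (hXmeas : ∀ i, Measurable (X i)) (hηmeas : ∀ i, Measurable (η i))
    (hXrec : ∀ k, 1 ≤ k → ∀ ω,
      X (2 * k) ω = α * X k ω + η (2 * k) ω ∧
      X (2 * k + 1) ω = β * X k ω + η (2 * k + 1) ω)
    (hηiid : iIndepFun
      (fun k ω => (η (2 * (k + 1)) ω, η (2 * (k + 1) + 1) ω)) ℙ)
    (hηlaw : ∀ k, Measure.map (fun ω => (η (2 * (k + 1)) ω, η (2 * (k + 1) + 1) ω)) ℙ
      = gaussian2 ρ)
    (hηX1 : IndepFun (X 1)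
      (fun ω => fun k : ℕ => (η (2 * (k + 1)) ω, η (2 * (k + 1) + 1) ω)) ℙ)
    -- the auxiliary process Y along a uniform random lineage
    (θ ε : ℕ → Ω → ℝ)
    (hθmeas : ∀ k, Measurable (θ k)) (hεmeas : ∀ k, Measurable (ε k))
    (hθεindep : iIndepFun
      (Sum.elim θ ε) ℙ)
    (hθεX1 : IndepFun (X 1)
      (fun ω => ((fun k : ℕ => θ k ω), (fun k : ℕ => ε k ω))) ℙ)
    (hθlaw : ∀ k, 1 ≤ k → Measure.map (θ k) ℙ
      = (1 / 2 : ℝ≥0∞) • Measure.dirac α + (1 / 2 : ℝ≥0∞) • Measure.dirac β)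
    (hεlaw : ∀ k, 1 ≤ k → Measure.map (ε k) ℙ = gaussianReal 0 1)
    (Y : ℕ → Ω → ℝ) (hY0 : ∀ ω, Y 0 ω = X 1 ω)
    (hYrec : ∀ n, 1 ≤ n → ∀ ω, Y n ω = θ n ω * Y (n - 1) ω + ε n ω)
    (n : ℕ) (a b : ℝ) (hab : a ≤ b) :
    ∫ ω, (∑ i ∈ Finset.Ico (2 ^ n) (2 ^ (n + 1)),
        Set.indicator (Set.Icc a b) (fun _ => (1 : ℝ)) (X i ω)) ∂ℙ
      = 2 ^ n * (ℙ {ω | Y n ω ∈ Set.Icc a b}).toReal := by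
  classical
  -- basic facts about the correlation
  have hρ2 : ρ ^ 2 < 1 := by nlinarith [hρ.1, hρ.2]
  have hs0pos : 0 < Real.sqrt (1 - ρ ^ 2) := Real.sqrt_pos.mpr (by linarith)
  have hsum : ρ ^ 2 + Real.sqrt (1 - ρ ^ 2) ^ 2 = 1 := by
    rw [Real.sq_sqrt (by linarith : (0:ℝ) ≤ 1 - ρ ^ 2)]; ring
  have hconv := aux_conv hsum hs0pos.ne'
  have hg2meas : Measurable (fun p : ℝ × ℝ => (p.1, ρ * p.1 + Real.sqrt (1 - ρ ^ 2) * p.2)) := by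
    fun_prop
  haveI : IsProbabilityMeasure (gaussian2 ρ) := by
    rw [gaussian2]; exact Measure.isProbabilityMeasure_map hg2meas.aemeasurable
  have hg2fst : (gaussian2 ρ).map Prod.fst = gaussianReal 0 1 := by
    rw [gaussian2, Measure.map_map measurable_fst hg2meas]
    rw [show (Prod.fst ∘ fun p : ℝ × ℝ => (p.1, ρ * p.1 + Real.sqrt (1 - ρ ^ 2) * p.2))
        = Prod.fst from rfl, Measure.map_fst_prod]
    simp
  have hg2snd : (gaussian2 ρ).map Prod.snd = gaussianReal 0 1 := by
    rw [gaussian2, Measure.map_map measurable_snd hg2meas]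
    exact hconv
  -- the noise pair process
  set P : ℕ → Ω → ℝ × ℝ := fun k ω => (η (2 * (k + 1)) ω, η (2 * (k + 1) + 1) ω) with hP
  have hPmeas : ∀ k, Measurable (P k) := fun k => (hηmeas _).prodMk (hηmeas _)
  -- filtration for the X process
  set F : ℕ → MeasurableSpace Ω := fun m =>
    MeasurableSpace.comap (X 1) inferInstance ⊔
      ⨆ j ∈ Set.Iio m, MeasurableSpace.comap (P j) inferInstance with hF
  have hFle : ∀ m, F m ≤ (inferInstance : MeasurableSpace Ω) := fun m =>
    sup_le (hXmeas 1).comap_le (iSup₂_le fun j _ => (hPmeas j).comap_le)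
  have hFmono : ∀ m m', m ≤ m' → F m ≤ F m' := fun m m' h =>
    sup_le_sup_left (biSup_mono fun j hj => lt_of_lt_of_le hj h) _
  have hXF : ∀ k, 1 ≤ k → Measurable[F (k - 1)] (X k) := by
    intro k
    induction k using Nat.strong_induction_on with
    | _ k ih =>
      intro hk
      rcases eq_or_lt_of_le hk with h1 | h2
      · rw [← h1]
        exact (Measurable.of_comap_le le_rfl).mono le_sup_left le_rfl
      · set j := k / 2 with hj
        have hj1 : 1 ≤ j := by omega
        have hjk : j < k := by omega
        have hmem : j - 1 ∈ Set.Iio (k - 1) := by simp only [Set.mem_Iio]; omega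
        have hPj : Measurable[F (k - 1)] (P (j - 1)) :=
          (Measurable.of_comap_le le_rfl).mono
            (le_trans (le_biSup (f := fun j => MeasurableSpace.comap (P j) inferInstance) hmem) le_sup_right) le_rfl
        have hXj : Measurable[F (k - 1)] (X j) := (ih j hjk hj1).mono (hFmono _ _ (by omega)) le_rfl
        have h2j : 2 * (j - 1 + 1) = 2 * j := by omega
        rcases Nat.mod_two_eq_zero_or_one k with h0 | h1
        · have hkk : k = 2 * j := by omega
          have hXe : X k = fun ω => α * X j ω + (P (j - 1) ω).1 := by
            funext ω
            rw [hkk, (hXrec j hj1 ω).1]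
            simp [hP, h2j]
          rw [hXe]
          exact (hXj.const_mul α).add (measurable_fst.comp hPj)
        · have hkk : k = 2 * j + 1 := by omega
          have hXe : X k = fun ω => β * X j ω + (P (j - 1) ω).2 := by
            funext ω
            rw [hkk, (hXrec j hj1 ω).2]
            simp [hP, h2j]
          rw [hXe]
          exact (hXj.const_mul β).add (measurable_snd.comp hPj)
  -- independence of `X k` and its children's noise
  have hprocmeas : Measurable (fun ω => fun k : ℕ => P k ω) := by
    rw [measurable_pi_iff]; exact hPmeas
  have hindepX : ∀ k, 1 ≤ k → IndepFun (X k) (P (k - 1)) ℙ := by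
    intro k hk
    have hbig : Indep (F (k - 1)) (MeasurableSpace.comap (P (k - 1)) inferInstance) ℙ := by
      refine aux_indep_sup (hXmeas 1).comap_le
        (iSup₂_le fun j _ => (hPmeas j).comap_le) ((hPmeas _).comap_le) ?_ ?_
      · refine indep_of_indep_of_le_right ((IndepFun_iff_Indep _ _ _).1 hηX1) ?_
        have hproc : Measurable[MeasurableSpace.comap
            (fun ω => fun k : ℕ => P k ω) MeasurableSpace.pi]
            (fun ω => fun k : ℕ => P k ω) := Measurable.of_comap_le le_rfl
        refine sup_le (iSup₂_le fun j _ => ?_) ?_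
        · exact Measurable.comap_le ((measurable_pi_apply j).comp hproc)
        · exact Measurable.comap_le ((measurable_pi_apply (k - 1)).comp hproc)
      · have hdisj : Disjoint (Set.Iio (k - 1)) ({k - 1} : Set ℕ) := by
          simp only [Set.disjoint_left, Set.mem_Iio, Set.mem_singleton_iff]
          omega
        have := indep_iSup_of_disjoint (fun j => (hPmeas j).comap_le) hηiid.iIndep hdisj
        simpa using this
    rw [IndepFun_iff_Indep]
    exact indep_of_indep_of_le_left hbig (measurable_iff_comap_le.mp (hXF k hk))
  -- one-step law recursion for X
  have hlawX : ∀ k, 1 ≤ k →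
      Measure.map (X (2 * k)) ℙ = Tc α (Measure.map (X k) ℙ) ∧
      Measure.map (X (2 * k + 1)) ℙ = Tc β (Measure.map (X k) ℙ) := by
    intro k hk
    haveI : IsProbabilityMeasure (Measure.map (X k) ℙ) :=
      Measure.isProbabilityMeasure_map (hXmeas k).aemeasurable
    have hjoint : Measure.map (fun ω => (X k ω, P (k - 1) ω)) ℙ
        = (Measure.map (X k) ℙ).prod (gaussian2 ρ) := by
      rw [← hηlaw (k - 1)]
      exact (indepFun_iff_map_prod_eq_prod_map_map (hXmeas k).aemeasurable
        (hPmeas (k - 1)).aemeasurable).1 (hindepX k hk)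
    have h2k : 2 * (k - 1 + 1) = 2 * k := by omega
    constructor
    · have hXe : X (2 * k) = (fun q : ℝ × (ℝ × ℝ) => α * q.1 + q.2.1) ∘
          (fun ω => (X k ω, P (k - 1) ω)) := by
        funext ω
        simp only [Function.comp_apply, hP, h2k]
        exact (hXrec k hk ω).1
      rw [hXe, ← Measure.map_map (by fun_prop) ((hXmeas k).prodMk (hPmeas _)), hjoint]
      rw [show (fun q : ℝ × (ℝ × ℝ) => α * q.1 + q.2.1)
          = (fun p : ℝ × ℝ => α * p.1 + p.2) ∘ (Prod.map id Prod.fst) from rfl,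
        ← Measure.map_map (Tc_meas α) (measurable_id.prodMap measurable_fst),
        ← Measure.map_prod_map _ _ measurable_id measurable_fst, Measure.map_id, hg2fst]
      rfl
    · have hXe : X (2 * k + 1) = (fun q : ℝ × (ℝ × ℝ) => β * q.1 + q.2.2) ∘
          (fun ω => (X k ω, P (k - 1) ω)) := by
        funext ω
        simp only [Function.comp_apply, hP, h2k]
        exact (hXrec k hk ω).2
      rw [hXe, ← Measure.map_map (by fun_prop) ((hXmeas k).prodMk (hPmeas _)), hjoint]
      rw [show (fun q : ℝ × (ℝ × ℝ) => β * q.1 + q.2.2)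
          = (fun p : ℝ × ℝ => β * p.1 + p.2) ∘ (Prod.map id Prod.snd) from rfl,
        ← Measure.map_map (Tc_meas β) (measurable_id.prodMap measurable_snd),
        ← Measure.map_prod_map _ _ measurable_id measurable_snd, Measure.map_id, hg2snd]
      rfl
  -- measurability of Y
  have hYmeas : ∀ n, Measurable (Y n) := by
    intro n
    induction n with
    | zero => rw [show Y 0 = X 1 from funext hY0]; exact hXmeas 1
    | succ n ih =>
      rw [show Y (n + 1) = fun ω => θ (n + 1) ω * Y n ω + ε (n + 1) ω from
        funext (hYrec (n + 1) (by omega))]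
      exact ((hθmeas _).mul ih).add (hεmeas _)
  -- filtration for the Y process
  set Sm : ℕ → Set (ℕ ⊕ ℕ) := fun m => {i | Sum.elim id id i ≤ m} with hSm
  set G : ℕ → MeasurableSpace Ω := fun m =>
    MeasurableSpace.comap (X 1) inferInstance ⊔
      ⨆ i ∈ Sm m, MeasurableSpace.comap (Sum.elim θ ε i) inferInstance with hG
  have hθεm : ∀ i : ℕ ⊕ ℕ, Measurable (Sum.elim θ ε i) := fun i => by
    cases i with
    | inl j => exact hθmeas j
    | inr j => exact hεmeas j
  have hGmono : ∀ m m', m ≤ m' → G m ≤ G m' := fun m m' h =>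
    sup_le_sup_left (biSup_mono fun i hi => le_trans hi h) _
  have hYG : ∀ n, Measurable[G n] (Y n) := by
    intro n
    induction n with
    | zero =>
      rw [show Y 0 = X 1 from funext hY0]
      exact (Measurable.of_comap_le le_rfl).mono le_sup_left le_rfl
    | succ n ih =>
      rw [show Y (n + 1) = fun ω => θ (n + 1) ω * Y n ω + ε (n + 1) ω from
        funext (hYrec (n + 1) (by omega))]
      have hθm : Measurable[G (n + 1)] (θ (n + 1)) :=
        (Measurable.of_comap_le (le_refl (MeasurableSpace.comap (Sum.elim θ ε
          (Sum.inl (n + 1))) inferInstance))).mono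
          (le_trans (le_biSup (f := fun i => MeasurableSpace.comap (Sum.elim θ ε i) inferInstance)
            (show Sum.inl (n + 1) ∈ Sm (n + 1) by simp [hSm])) le_sup_right) le_rfl
      have hεm : Measurable[G (n + 1)] (ε (n + 1)) :=
        (Measurable.of_comap_le (le_refl (MeasurableSpace.comap (Sum.elim θ ε
          (Sum.inr (n + 1))) inferInstance))).mono
          (le_trans (le_biSup (f := fun i => MeasurableSpace.comap (Sum.elim θ ε i) inferInstance)
            (show Sum.inr (n + 1) ∈ Sm (n + 1) by simp [hSm])) le_sup_right) le_rfl
      exact (hθm.mul (ih.mono (hGmono n (n + 1) (by omega)) le_rfl)).add hεm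
  -- independence of `Y n` and the next innovation
  have hindepY : ∀ n, IndepFun (Y n) (fun ω => (θ (n + 1) ω, ε (n + 1) ω)) ℙ := by
    intro n
    set T : Set (ℕ ⊕ ℕ) := {Sum.inl (n + 1), Sum.inr (n + 1)} with hT
    have hCle : (⨆ i ∈ T, MeasurableSpace.comap (Sum.elim θ ε i) inferInstance)
        ≤ (inferInstance : MeasurableSpace Ω) := iSup₂_le fun i _ => (hθεm i).comap_le
    have hbig : Indep (G n) (⨆ i ∈ T, MeasurableSpace.comap (Sum.elim θ ε i) inferInstance) ℙ := by
      refine aux_indep_sup (hXmeas 1).comap_le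
        (iSup₂_le fun i _ => (hθεm i).comap_le) hCle ?_ ?_
      · refine indep_of_indep_of_le_right ((IndepFun_iff_Indep _ _ _).1 hθεX1) ?_
        have hproc : Measurable[MeasurableSpace.comap
            (fun ω => ((fun k : ℕ => θ k ω), (fun k : ℕ => ε k ω))) inferInstance]
            (fun ω => ((fun k : ℕ => θ k ω), (fun k : ℕ => ε k ω))) :=
          Measurable.of_comap_le le_rfl
        have helim : ∀ i : ℕ ⊕ ℕ, Measurable[MeasurableSpace.comap
            (fun ω => ((fun k : ℕ => θ k ω), (fun k : ℕ => ε k ω))) inferInstance]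
            (Sum.elim θ ε i) := by
          intro i
          cases i with
          | inl j => exact ((measurable_pi_apply j).comp (measurable_fst.comp hproc))
          | inr j => exact ((measurable_pi_apply j).comp (measurable_snd.comp hproc))
        exact sup_le (iSup₂_le fun i _ => Measurable.comap_le (helim i))
          (iSup₂_le fun i _ => Measurable.comap_le (helim i))
      · have hdisj : Disjoint (Sm n) T := by
          rw [Set.disjoint_left]
          rintro i hi (rfl | rfl) <;> simp [hSm] at hi <;> omega
        exact indep_iSup_of_disjoint (fun i => (hθεm i).comap_le) hθεindep.iIndep hdisj
    rw [IndepFun_iff_Indep]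
    refine indep_of_indep_of_le_right
      (indep_of_indep_of_le_left hbig (measurable_iff_comap_le.mp (hYG n))) ?_
    refine Measurable.comap_le (Measurable.prodMk ?_ ?_)
    · exact (Measurable.of_comap_le (le_refl (MeasurableSpace.comap (Sum.elim θ ε
        (Sum.inl (n + 1))) inferInstance))).mono
        (le_biSup (f := fun i => MeasurableSpace.comap (Sum.elim θ ε i) inferInstance)
          (show Sum.inl (n + 1) ∈ T by simp [hT])) le_rfl
    · exact (Measurable.of_comap_le (le_refl (MeasurableSpace.comap (Sum.elim θ ε
        (Sum.inr (n + 1))) inferInstance))).mono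
        (le_biSup (f := fun i => MeasurableSpace.comap (Sum.elim θ ε i) inferInstance)
          (show Sum.inr (n + 1) ∈ T by simp [hT])) le_rfl
  -- one-step law recursion for Y
  have hhalf : (1 / 2 : ℝ≥0∞) ≠ ⊤ := by simp
  have hlawY : ∀ n, Measure.map (Y (n + 1)) ℙ
      = (1 / 2 : ℝ≥0∞) • Tc α (Measure.map (Y n) ℙ)
        + (1 / 2 : ℝ≥0∞) • Tc β (Measure.map (Y n) ℙ) := by
    intro n
    haveI : IsProbabilityMeasure (Measure.map (Y n) ℙ) :=
      Measure.isProbabilityMeasure_map (hYmeas n).aemeasurable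
    have hθεlaw : Measure.map (fun ω => (θ (n + 1) ω, ε (n + 1) ω)) ℙ
        = ((1 / 2 : ℝ≥0∞) • Measure.dirac α + (1 / 2 : ℝ≥0∞) • Measure.dirac β).prod
            (gaussianReal 0 1) := by
      rw [← hθlaw (n + 1) (by omega), ← hεlaw (n + 1) (by omega)]
      exact (indepFun_iff_map_prod_eq_prod_map_map (hθmeas _).aemeasurable
        (hεmeas _).aemeasurable).1
        (hθεindep.indepFun (show (Sum.inl (n + 1) : ℕ ⊕ ℕ) ≠ Sum.inr (n + 1) by simp))
    have hjoint : Measure.map (fun ω => (Y n ω, (θ (n + 1) ω, ε (n + 1) ω))) ℙ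
        = (Measure.map (Y n) ℙ).prod (((1 / 2 : ℝ≥0∞) • Measure.dirac α
            + (1 / 2 : ℝ≥0∞) • Measure.dirac β).prod (gaussianReal 0 1)) := by
      rw [← hθεlaw]
      exact (indepFun_iff_map_prod_eq_prod_map_map (hYmeas n).aemeasurable
        ((hθmeas _).prodMk (hεmeas _)).aemeasurable).1 (hindepY n)
    have hYe : Y (n + 1) = (fun q : ℝ × (ℝ × ℝ) => q.2.1 * q.1 + q.2.2) ∘
        (fun ω => (Y n ω, (θ (n + 1) ω, ε (n + 1) ω))) := funext (hYrec (n + 1) (by omega))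
    have hTc : ∀ c : ℝ, Measure.map (fun q : ℝ × (ℝ × ℝ) => q.2.1 * q.1 + q.2.2)
        ((Measure.map (Y n) ℙ).prod ((Measure.dirac c).prod (gaussianReal 0 1)))
        = Tc c (Measure.map (Y n) ℙ) := by
      intro c
      rw [Measure.dirac_prod,
        show (Measure.map (Y n) ℙ).prod (Measure.map (Prod.mk c) (gaussianReal 0 1))
          = (Measure.map id (Measure.map (Y n) ℙ)).prod
              (Measure.map (Prod.mk c) (gaussianReal 0 1)) from by rw [Measure.map_id],
        Measure.map_prod_map _ _ measurable_id measurable_prodMk_left,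
        Measure.map_map (by fun_prop) (measurable_id.prodMap measurable_prodMk_left)]
      rfl
    rw [hYe, ← Measure.map_map (by fun_prop)
      ((hYmeas n).prodMk ((hθmeas _).prodMk (hεmeas _))), hjoint,
      Measure.add_prod, aux_smul_prod' _ hhalf, aux_smul_prod' _ hhalf,
      Measure.prod_add, aux_prod_smul _ hhalf, aux_prod_smul _ hhalf,
      Measure.map_add _ _ (by fun_prop), Measure.map_smul, Measure.map_smul, hTc α, hTc β]
  -- the key many-to-one identity at the level of laws
  haveI hXprob : ∀ i, IsProbabilityMeasure (Measure.map (X i) ℙ) := fun i =>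
    Measure.isProbabilityMeasure_map (hXmeas i).aemeasurable
  have key : ∀ m, ∑ i ∈ Finset.Ico (2 ^ m) (2 ^ (m + 1)), Measure.map (X i) ℙ
      = ((2 : ℝ≥0∞) ^ m) • Measure.map (Y m) ℙ := by
    intro m
    induction m with
    | zero =>
      rw [show Finset.Ico (2 ^ 0) (2 ^ (0 + 1)) = {1} from rfl, Finset.sum_singleton,
        pow_zero, one_smul, show Y 0 = X 1 from funext hY0]
    | succ m ih =>
      haveI : IsProbabilityMeasure (Measure.map (Y m) ℙ) :=
        Measure.isProbabilityMeasure_map (hYmeas m).aemeasurable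
      have h2m : (2 : ℕ) ^ (m + 1 + 1) - 2 ^ (m + 1) = 2 * 2 ^ m := by
        rw [Nat.two_pow_succ (m + 1), Nat.add_sub_cancel, pow_succ, mul_comm]
      have h2m' : (2 : ℕ) ^ (m + 1) - 2 ^ m = 2 ^ m := by
        rw [Nat.two_pow_succ m, Nat.add_sub_cancel]
      have hre : ∑ i ∈ Finset.Ico (2 ^ (m + 1)) (2 ^ (m + 1 + 1)), Measure.map (X i) ℙ
          = ∑ k ∈ Finset.range (2 ^ m),
              (Tc α (Measure.map (X (2 ^ m + k)) ℙ) + Tc β (Measure.map (X (2 ^ m + k)) ℙ)) := by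
        rw [Finset.sum_Ico_eq_sum_range, h2m, aux_sum_double]
        refine Finset.sum_congr rfl fun k hk => ?_
        have he : (2 : ℕ) ^ (m + 1) + 2 * k = 2 * (2 ^ m + k) := by
          rw [pow_succ, mul_comm]; ring
        have ho : (2 : ℕ) ^ (m + 1) + (2 * k + 1) = 2 * (2 ^ m + k) + 1 := by
          rw [pow_succ, mul_comm]; ring
        have h1k : 1 ≤ 2 ^ m + k := le_trans (Nat.one_le_two_pow) (Nat.le_add_right _ _)
        rw [he, ho, (hlawX (2 ^ m + k) h1k).1, (hlawX (2 ^ m + k) h1k).2]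
      have hsum : ∑ k ∈ Finset.range (2 ^ m), Measure.map (X (2 ^ m + k)) ℙ
          = ((2 : ℝ≥0∞) ^ m) • Measure.map (Y m) ℙ := by
        rw [← ih, Finset.sum_Ico_eq_sum_range, h2m']
      rw [hre, Finset.sum_add_distrib, ← Tc_sum, ← Tc_sum, hsum,
        Tc_smul _ _ (by simp) _, Tc_smul _ _ (by simp) _, hlawY m, smul_add, smul_smul, smul_smul,
        show ((2 : ℝ≥0∞) ^ (m + 1)) * (1 / 2) = (2 : ℝ≥0∞) ^ m from by
          rw [pow_succ, one_div, mul_assoc, ENNReal.mul_inv_cancel two_ne_zero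
            (by norm_num), mul_one]]
  -- conclusion
  have hind : ∀ i ω, Set.indicator (Set.Icc a b) (fun _ => (1 : ℝ)) (X i ω)
      = Set.indicator (X i ⁻¹' Set.Icc a b) (fun _ => (1 : ℝ)) ω := by
    intro i ω
    by_cases h : X i ω ∈ Set.Icc a b <;>
      simp [Set.indicator_apply, h, Set.mem_preimage]
  have hpre : ∀ i, MeasurableSet (X i ⁻¹' Set.Icc a b) := fun i =>
    (hXmeas i) measurableSet_Icc
  simp_rw [hind]
  calc ∫ ω, (∑ i ∈ Finset.Ico (2 ^ n) (2 ^ (n + 1)),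
        Set.indicator (X i ⁻¹' Set.Icc a b) (fun _ => (1 : ℝ)) ω) ∂ℙ
      = ∑ i ∈ Finset.Ico (2 ^ n) (2 ^ (n + 1)),
          ∫ ω, Set.indicator (X i ⁻¹' Set.Icc a b) (fun _ => (1 : ℝ)) ω ∂ℙ := by
        exact integral_finset_sum _ (fun i _ => (integrable_const (1 : ℝ)).indicator (hpre i))
    _ = ∑ i ∈ Finset.Ico (2 ^ n) (2 ^ (n + 1)), (ℙ (X i ⁻¹' Set.Icc a b)).toReal := by
        refine Finset.sum_congr rfl fun i _ => ?_
        exact integral_indicator_one (hpre i)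
    _ = ((∑ i ∈ Finset.Ico (2 ^ n) (2 ^ (n + 1)), Measure.map (X i) ℙ) (Set.Icc a b)).toReal := by
        rw [Measure.finset_sum_apply, ENNReal.toReal_sum]
        · refine Finset.sum_congr rfl fun i _ => ?_
          rw [Measure.map_apply (hXmeas i) measurableSet_Icc]
        · exact fun i _ => by
            rw [Measure.map_apply (hXmeas i) measurableSet_Icc]
            exact (measure_lt_top _ _).ne
    _ = 2 ^ n * (ℙ {ω | Y n ω ∈ Set.Icc a b}).toReal := by
        rw [key n, Measure.smul_apply, smul_eq_mul, ENNReal.toReal_mul,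
          Measure.map_apply (hYmeas n) measurableSet_Icc,
          show ((2 : ℝ≥0∞) ^ n).toReal = (2 : ℝ) ^ n from by simp [ENNReal.toReal_pow]]
        rfl
end

section
/- If αβ ≥ 1 with α, β > 0, then the random series (A_∞*)² = Σ_{k=1}^∞ ∏_{ℓ=1}^{k-1} θ_ℓ² diverges almost surely, where (θ_ℓ) are i.i.d. uniform on {α, β}. -/
open MeasureTheory ProbabilityTheory
open scoped ENNReal

/-- Transfer summability along a tail modification. -/
lemma aux_summable_congr_atTop {f h : ℕ → ℝ} (K : ℕ) (hh : Summable h)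
    (hfe : ∀ k, K ≤ k → f k = h k) : Summable f := by
  rw [← summable_nat_add_iff K]
  exact ((summable_nat_add_iff K).2 hh).congr fun n => (hfe (n + K) (by omega)).symm

/-- For nonnegative terms, summability is equivalent to convergence of partial sums. -/
lemma aux_summable_iff_tendsto {f : ℕ → ℝ} (hf : ∀ n, 0 ≤ f n) :
    Summable f ↔ ∃ c, Filter.Tendsto (fun n => ∑ i ∈ Finset.range n, f i)
      Filter.atTop (nhds c) := by
  constructor
  · intro hs
    exact ⟨_, hs.hasSum.tendsto_sum_nat⟩
  · rintro ⟨c, hc⟩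
    have hmono : Monotone fun n => ∑ i ∈ Finset.range n, f i := by
      intro a b hab
      exact Finset.sum_le_sum_of_subset_of_nonneg (Finset.range_subset_range.2 hab)
        (fun i _ _ => hf i)
    exact summable_of_sum_range_le hf fun n => hmono.ge_of_tendsto hc n

/-- Measurability of the summability set for a sequence of nonnegative functions,
with respect to an arbitrary σ-algebra making the partial sums measurable. -/
lemma aux_measurableSet_summable {Ω : Type*} {m : MeasurableSpace Ω} {f : ℕ → Ω → ℝ}
    (hnn : ∀ k ω, 0 ≤ f k ω)
    (hm : ∀ n, Measurable[m] fun ω => ∑ k ∈ Finset.range n, f k ω) :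
    MeasurableSet[m] {ω | Summable fun k => f k ω} := by
  letI := m
  have h : {ω | Summable fun k => f k ω}
      = {ω | ∃ c, Filter.Tendsto (fun n => ∑ k ∈ Finset.range n, f k ω)
          Filter.atTop (nhds c)} := by
    ext ω
    exact aux_summable_iff_tendsto fun k => hnn k ω
  rw [h]
  exact measurableSet_exists_tendsto hm

/-- If `αβ ≥ 1` with `α, β > 0`, then the random series
`(A_∞*)² = Σ_{k=1}^∞ ∏_{ℓ=1}^{k-1} θ_ℓ²` diverges almost surely, where `(θ_ℓ)` are
i.i.d. uniform on `{α, β}`. -/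
theorem stmt_12
    {Ω : Type*} [MeasureSpace Ω] [IsProbabilityMeasure (ℙ : Measure Ω)]
    (α β : ℝ) (hα : 0 < α) (hβ : 0 < β) (hαβ : 1 ≤ α * β)
    (θ : ℕ → Ω → ℝ) (hmeas : ∀ k, Measurable (θ k))
    (hindep : iIndepFun θ ℙ)
    (hlaw : ∀ k, Measure.map (θ k) ℙ
      = (1 / 2 : ℝ≥0∞) • Measure.dirac α + (1 / 2 : ℝ≥0∞) • Measure.dirac β) :
    ℙ {ω | Summable (fun k : ℕ => ∏ ℓ ∈ Finset.Icc 1 (k - 1), (θ ℓ ω) ^ 2)} = 0 := by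
  classical
  -- products over tail windows
  set Q : ℕ → ℕ → Ω → ℝ := fun m k ω => ∏ ℓ ∈ Finset.Ioc m (k - 1), θ ℓ ω ^ 2 with hQdef
  set U : ℕ → Set Ω := fun m => {ω | Summable fun k => Q m k ω} with hUdef
  have hQnonneg : ∀ m k ω, 0 ≤ Q m k ω := fun m k ω =>
    Finset.prod_nonneg fun ℓ _ => sq_nonneg _
  -- the target set is U 0
  have htarget : {ω | Summable (fun k : ℕ => ∏ ℓ ∈ Finset.Icc 1 (k - 1), (θ ℓ ω) ^ 2)}
      = U 0 := by
    simp only [hUdef, hQdef, Set.ext_iff]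
    intro ω
    rw [show (Finset.Icc 1 : ℕ → Finset ℕ) = Finset.Ioc 0 from funext fun n => Finset.Icc_add_one_left_eq_Ioc 0 n]
  -- the good event
  set G : Set Ω := {ω | ∀ ℓ, θ ℓ ω = α ∨ θ ℓ ω = β} with hGdef
  have hGc : ℙ Gᶜ = 0 := by
    have hsub : Gᶜ ⊆ ⋃ ℓ, θ ℓ ⁻¹' ({α, β}ᶜ) := by
      intro ω hω
      simp only [hGdef, Set.mem_compl_iff, Set.mem_setOf_eq, not_forall] at hω
      obtain ⟨ℓ, hℓ⟩ := hω
      push_neg at hℓ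
      exact Set.mem_iUnion.2 ⟨ℓ, by simp [hℓ.1, hℓ.2]⟩
    refine measure_mono_null hsub (measure_iUnion_null fun ℓ => ?_)
    have hms : MeasurableSet ({α, β}ᶜ : Set ℝ) := by
      rw [Set.insert_eq]
      exact ((measurableSet_singleton α).union (measurableSet_singleton β)).compl
    rw [← Measure.map_apply (hmeas ℓ) hms, hlaw ℓ]
    have h1 : Measure.dirac α ({α, β}ᶜ : Set ℝ) = 0 := by
      rw [Measure.dirac_apply' _ hms]
      simp
    have h2 : Measure.dirac β ({α, β}ᶜ : Set ℝ) = 0 := by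
      rw [Measure.dirac_apply' _ hms]
      simp
    simp [h1, h2]
  -- splitting the product
  have hsplit : ∀ m m' k (ω : Ω), m ≤ m' → m' + 1 ≤ k →
      Q m k ω = (∏ ℓ ∈ Finset.Ioc m m', θ ℓ ω ^ 2) * Q m' k ω := by
    intro m m' k ω h1 h2
    simp only [hQdef]
    rw [Finset.prod_Ioc_consecutive _ h1 (by omega : m' ≤ k - 1)]
  -- monotonicity of U (downward)
  have hmono : ∀ m m', m ≤ m' → U m' ⊆ U m := by
    intro m m' hmm ω hω
    simp only [hUdef, Set.mem_setOf_eq] at hω ⊢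
    exact aux_summable_congr_atTop (m' + 1)
      (hω.mul_left (∏ ℓ ∈ Finset.Ioc m m', θ ℓ ω ^ 2))
      (fun k hk => hsplit m m' k ω hmm hk)
  -- on G, upward inclusion
  have hmonoG : ∀ m m', m ≤ m' → ∀ ω ∈ G, ω ∈ U m → ω ∈ U m' := by
    intro m m' hmm ω hG hω
    simp only [hUdef, Set.mem_setOf_eq] at hω ⊢
    have hc : (∏ ℓ ∈ Finset.Ioc m m', θ ℓ ω ^ 2) ≠ 0 := by
      refine Finset.prod_ne_zero_iff.2 fun ℓ _ => ?_
      rcases hG ℓ with h | h <;> simp [h] <;> positivity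
    refine aux_summable_congr_atTop (m' + 1)
      (hω.mul_left (∏ ℓ ∈ Finset.Ioc m m', θ ℓ ω ^ 2)⁻¹) (fun k hk => ?_)
    rw [hsplit m m' k ω hmm hk, ← mul_assoc, inv_mul_cancel₀ hc, one_mul]
  -- the tail event
  set T : Set Ω := ⋂ m, U m with hTdef
  -- key probability bound: ℙ (Q 0 k < 1) ≤ 1/2
  have hhalf : ∀ k : ℕ, ℙ {ω | Q 0 k ω < 1} ≤ 1 / 2 := by
    intro k
    by_cases hab : α = β
    · -- degenerate case: α = β hence α ≥ 1, so Q ≥ 1 on G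
      have hα1 : 1 ≤ α := by nlinarith [hαβ, hα.le]
      have hsubG : {ω | Q 0 k ω < 1} ⊆ Gᶜ := by
        intro ω hω hG
        have h1 : 1 ≤ ∏ ℓ ∈ Finset.Ioc 0 (k - 1), θ ℓ ω ^ 2 := by
          calc (1:ℝ) = ∏ ℓ ∈ Finset.Ioc 0 (k - 1), 1 := by simp
            _ ≤ ∏ ℓ ∈ Finset.Ioc 0 (k - 1), θ ℓ ω ^ 2 := by
                refine Finset.prod_le_prod (fun ℓ _ => by norm_num) fun ℓ _ => ?_
                have hθ : θ ℓ ω = α := by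
                  rcases hG ℓ with h | h
                  exacts [h, by rw [h, hab]]
                rw [hθ]
                nlinarith
        exact absurd hω (not_lt.2 h1)
      refine le_trans (measure_mono hsubG) ?_
      rw [hGc]
      exact zero_le'
    · -- main case: α ≠ β
      set F : Finset ℕ := Finset.Ioc 0 (k - 1) with hF
      set n : ℕ := F.card with hn
      set v : Finset ℕ → ℕ → ℝ := fun s ℓ => if ℓ ∈ s then α else β with hv
      set e : Finset ℕ → Set Ω := fun s => ⋂ ℓ ∈ F, θ ℓ ⁻¹' {v s ℓ} with he
      have hvmem : ∀ s ℓ, v s ℓ = α ∨ v s ℓ = β := by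
        intro s ℓ
        by_cases h : ℓ ∈ s <;> simp [hv, h]
      have hvpos : ∀ s ℓ, 0 < v s ℓ := by
        intro s ℓ
        rcases hvmem s ℓ with h | h <;> rw [h] <;> assumption
      have hsingle : ∀ ℓ (x : ℝ), (x = α ∨ x = β) → ℙ (θ ℓ ⁻¹' {x}) = 1 / 2 := by
        intro ℓ x hx
        rw [← Measure.map_apply (hmeas ℓ) (measurableSet_singleton x), hlaw ℓ,
          Measure.add_apply, Measure.smul_apply, Measure.smul_apply,
          Measure.dirac_apply' _ (measurableSet_singleton _),
          Measure.dirac_apply' _ (measurableSet_singleton _)]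
        have hba : β ≠ α := Ne.symm hab
        rcases hx with rfl | rfl
        · simp [Set.indicator_apply, hba]
        · simp [Set.indicator_apply, hab]
      have he_prob : ∀ s, ℙ (e s) = (1 / 2 : ℝ≥0∞) ^ n := by
        intro s
        rw [he, hn]
        rw [hindep.measure_inter_preimage_eq_mul F
          (sets := fun ℓ => {v s ℓ}) (fun i _ => measurableSet_singleton _)]
        rw [Finset.prod_congr rfl fun ℓ _ => hsingle ℓ (v s ℓ) (hvmem s ℓ),
          Finset.prod_const]
      set D : Finset (Finset ℕ) :=
        F.powerset.filter (fun s => ∏ ℓ ∈ F, (v s ℓ) ^ 2 < 1) with hD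
      have hpair : ∀ s, (∏ ℓ ∈ F, (v s ℓ) ^ 2) * (∏ ℓ ∈ F, (v (F \ s) ℓ) ^ 2)
          = ((α * β) ^ 2) ^ n := by
        intro s
        rw [← Finset.prod_mul_distrib, hn, ← Finset.prod_const]
        refine Finset.prod_congr rfl fun ℓ hℓ => ?_
        by_cases h : ℓ ∈ s
        · have h2 : ℓ ∉ F \ s := by simp [h]
          simp only [hv, if_pos h, if_neg h2]
          ring
        · have h2 : ℓ ∈ F \ s := Finset.mem_sdiff.2 ⟨hℓ, h⟩
          simp only [hv, if_neg h, if_pos h2]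
          ring
      have hone_le : (1 : ℝ) ≤ ((α * β) ^ 2) ^ n := by
        have h2 : (1 : ℝ) ≤ (α * β) ^ 2 := by nlinarith
        exact one_le_pow₀ h2
      have hprod_pos : ∀ s, 0 < ∏ ℓ ∈ F, (v s ℓ) ^ 2 :=
        fun s => Finset.prod_pos fun ℓ _ => pow_pos (hvpos s ℓ) 2
      -- counting
      have hcard : D.card + D.card ≤ 2 ^ n := by
        have hinj : ∀ s ∈ D, F \ s ∈ F.powerset \ D := by
          intro s hs
          simp only [hD, Finset.mem_filter, Finset.mem_powerset] at hs
          obtain ⟨hsF, hslt⟩ := hs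
          simp only [Finset.mem_sdiff, Finset.mem_powerset, hD, Finset.mem_filter,
            not_and, not_lt]
          refine ⟨Finset.sdiff_subset, fun _ => ?_⟩
          by_contra hcon
          push_neg at hcon
          nlinarith [hpair s, hprod_pos s, hprod_pos (F \ s)]
        have hinj2 : Set.InjOn (fun s => F \ s) ↑D := by
          intro s1 h1 s2 h2 h
          simp only [hD, Finset.coe_filter, Set.mem_setOf_eq, Finset.mem_powerset] at h1 h2
          have e1 : F \ (F \ s1) = s1 := Finset.sdiff_sdiff_eq_self h1.1
          have e2 : F \ (F \ s2) = s2 := Finset.sdiff_sdiff_eq_self h2.1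
          rw [← e1, ← e2]
          simp only at h
          rw [h]
        have hcard1 : D.card ≤ (F.powerset \ D).card :=
          Finset.card_le_card_of_injOn _ hinj hinj2
        have hDsub : D ⊆ F.powerset := Finset.filter_subset _ _
        have hcard2 : (F.powerset \ D).card = 2 ^ n - D.card := by
          rw [Finset.card_sdiff_of_subset hDsub, Finset.card_powerset, hn]
        have hcard3 : D.card ≤ 2 ^ n := by
          calc D.card ≤ F.powerset.card := Finset.card_le_card hDsub
            _ = 2 ^ n := by rw [Finset.card_powerset, hn]
        omega
      -- the union bound
      have hQF : ∀ ω, Q 0 k ω = ∏ ℓ ∈ F, θ ℓ ω ^ 2 := fun ω => rfl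
      have hsub2 : {ω | Q 0 k ω < 1} ⊆ (⋃ s ∈ D, e s) ∪ Gᶜ := by
        intro ω hω
        by_cases hG : ω ∈ G
        · left
          set s : Finset ℕ := F.filter (fun ℓ => θ ℓ ω = α) with hs
          have hvθ : ∀ ℓ ∈ F, v s ℓ = θ ℓ ω := by
            intro ℓ hℓ
            by_cases h2 : θ ℓ ω = α
            · rw [hv]
              simp only [hs, Finset.mem_filter]
              rw [if_pos ⟨hℓ, h2⟩, h2]
            · have h3 : θ ℓ ω = β := (hG ℓ).resolve_left h2
              rw [hv]
              simp only [hs, Finset.mem_filter]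
              rw [if_neg (fun hcon => h2 hcon.2), h3]
          have hsD : s ∈ D := by
            simp only [hD, Finset.mem_filter, Finset.mem_powerset]
            refine ⟨Finset.filter_subset _ _, ?_⟩
            have heq : ∏ ℓ ∈ F, (v s ℓ) ^ 2 = Q 0 k ω := by
              rw [hQF]
              exact Finset.prod_congr rfl fun ℓ hℓ => by rw [hvθ ℓ hℓ]
            rw [heq]
            exact hω
          have hωe : ω ∈ e s := by
            simp only [he, Set.mem_iInter]
            intro ℓ hℓ
            simp only [Set.mem_preimage, Set.mem_singleton_iff]
            exact (hvθ ℓ hℓ).symm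
          exact Set.mem_biUnion hsD hωe
        · right
          exact hG
      calc ℙ {ω | Q 0 k ω < 1} ≤ ℙ ((⋃ s ∈ D, e s) ∪ Gᶜ) := measure_mono hsub2
        _ ≤ ℙ (⋃ s ∈ D, e s) + ℙ Gᶜ := measure_union_le _ _
        _ = ℙ (⋃ s ∈ D, e s) := by rw [hGc, add_zero]
        _ ≤ ∑ s ∈ D, ℙ (e s) := measure_biUnion_finset_le _ _
        _ = D.card • (1 / 2 : ℝ≥0∞) ^ n := by
            rw [Finset.sum_congr rfl fun s _ => he_prob s, Finset.sum_const]
        _ ≤ 1 / 2 := by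
            have hpow : ((1 : ℝ≥0∞) / 2) ^ n = ((2 : ℝ≥0∞) ^ n)⁻¹ := by
              rw [one_div, ← ENNReal.inv_pow]
            rw [nsmul_eq_mul, hpow,
              ENNReal.le_div_iff_mul_le (Or.inl two_ne_zero) (Or.inl ENNReal.ofNat_ne_top)]
            have h2n : ((2 : ℝ≥0∞) ^ n) ≠ 0 := pow_ne_zero n two_ne_zero
            have h2nt : ((2 : ℝ≥0∞) ^ n) ≠ ∞ := ENNReal.pow_ne_top ENNReal.ofNat_ne_top
            calc (D.card : ℝ≥0∞) * ((2 : ℝ≥0∞) ^ n)⁻¹ * 2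
                = ((D.card + D.card : ℕ) : ℝ≥0∞) * ((2 : ℝ≥0∞) ^ n)⁻¹ := by
                  push_cast
                  ring
              _ ≤ ((2 ^ n : ℕ) : ℝ≥0∞) * ((2 : ℝ≥0∞) ^ n)⁻¹ := by
                  exact mul_le_mul_left (Nat.cast_le.2 hcard) _
              _ = 1 := by
                  push_cast
                  exact ENNReal.mul_inv_cancel h2n h2nt
  -- T has small probability
  have hTle : ℙ T ≤ 1 / 2 := by
    set A : ℕ → Set Ω := fun N => {ω | ∀ k, N ≤ k → Q 0 k ω < 1} with hAdef
    have hTsub : T ⊆ ⋃ N, A N := by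
      intro ω hω
      have hU0 : ω ∈ U 0 := Set.mem_iInter.1 hω 0
      have htend : Filter.Tendsto (fun k => Q 0 k ω) Filter.atTop (nhds 0) :=
        (Set.mem_setOf_eq ▸ hU0).tendsto_atTop_zero
      have : ∀ᶠ k in Filter.atTop, Q 0 k ω < 1 :=
        htend.eventually_lt_const one_pos
      obtain ⟨N, hN⟩ := Filter.eventually_atTop.1 this
      exact Set.mem_iUnion.2 ⟨N, hN⟩
    have hdir : Directed (· ⊆ ·) A := by
      refine Monotone.directed_le fun a b hab ω hω k hk => hω k (hab.trans hk)
    calc ℙ T ≤ ℙ (⋃ N, A N) := measure_mono hTsub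
      _ = ⨆ N, ℙ (A N) := hdir.measure_iUnion
      _ ≤ 1 / 2 := by
          refine iSup_le fun N => ?_
          refine le_trans (measure_mono fun ω hω => hω N le_rfl) (hhalf N)
  -- zero-one law
  have h01 : ℙ T = 0 ∨ ℙ T = 1 := by
    set s : ℕ → MeasurableSpace Ω :=
      fun n => MeasurableSpace.comap (θ n) inferInstance with hsdef
    have h_le : ∀ n, s n ≤ (inferInstance : MeasurableSpace Ω) :=
      fun n => (hmeas n).comap_le
    have h_indep : iIndep s ℙ := hindep.iIndep
    refine measure_zero_or_one_of_measurableSet_limsup_atTop h_le h_indep ?_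
    rw [Filter.limsup_eq_iInf_iSup_of_nat, MeasurableSpace.measurableSet_iInf]
    intro N
    have hTN : T = ⋂ j, U (N + j) := by
      apply Set.Subset.antisymm
      · exact Set.subset_iInter fun j => Set.iInter_subset _ _
      · intro ω hω
        exact Set.mem_iInter.2 fun m =>
          hmono m (N + m) (by omega) (Set.mem_iInter.1 hω m)
    rw [hTN]
    refine MeasurableSet.iInter fun j => ?_
    have hθm : ∀ ℓ, N ≤ ℓ → Measurable[⨆ i, ⨆ _ : N ≤ i, s i] (θ ℓ) := by
      intro ℓ hℓ
      exact measurable_iff_comap_le.2 (le_iSup₂ (f := fun i (_ : N ≤ i) => s i) ℓ hℓ)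
    have hmeas' : ∀ m : ℕ,
        Measurable[⨆ i, ⨆ _ : N ≤ i, s i]
          fun ω => ∑ k ∈ Finset.range m, Q (N + j) k ω := by
      intro m
      refine Finset.measurable_sum _ fun k _ => ?_
      refine Finset.measurable_prod _ fun ℓ hℓ => ?_
      have hℓN : N ≤ ℓ := by
        have := (Finset.mem_Ioc.1 hℓ).1
        omega
      exact (hθm ℓ hℓN).pow_const 2
    exact aux_measurableSet_summable (fun k ω => hQnonneg _ _ _) hmeas'
  have hT0 : ℙ T = 0 := by
    rcases h01 with h | h
    · exact h
    · exfalso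
      rw [h] at hTle
      norm_num at hTle
  -- conclude
  rw [htarget]
  have hsub : U 0 ⊆ T ∪ Gᶜ := by
    intro ω hω
    by_cases hG : ω ∈ G
    · exact Or.inl (Set.mem_iInter.2 fun m => hmonoG 0 m (Nat.zero_le m) ω hG hω)
    · exact Or.inr hG
  refine le_antisymm ?_ zero_le'
  calc ℙ (U 0) ≤ ℙ (T ∪ Gᶜ) := measure_mono hsub
    _ ≤ ℙ T + ℙ Gᶜ := measure_union_le _ _
    _ = 0 := by rw [hT0, hGc, add_zero]
end

section
/- Let 0 < β < α, fix p < n, and consider the sets 𝔍_n^k(a) as above for 1 ≤ a ≤ p and k ≥ (n-p)ε. These sets are pairwise disjoint (for distinct pairs (a,k)), disjoint from T_n(2^p), and contained in T_n; consequently #(T_n \ T_n(2^p)) ≥ ε p · #(T_n(2^p) \ B_n^p), where B_n^p = {i ∈ T_n(2^p) : number of ones < ε(n-p)}. -/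
open Finset

/-- `0 ↦ α`, `1 ↦ β`. -/
noncomputable def barv (α β : ℝ) (b : Bool) : ℝ := if b then β else α

/-- `A[i]² = Σ_{k=1}^n ∏_{ℓ=k+1}^n \bar{i_ℓ}²` for a binary string `i` of length `n`. -/
noncomputable def A2 (α β : ℝ) {n : ℕ} (i : Fin n → Bool) : ℝ :=
  ∑ k : Fin n, ∏ ℓ ∈ Finset.univ.filter (fun ℓ : Fin n => k < ℓ), (barv α β (i ℓ)) ^ 2

/-- `T_n = {i ∈ {0,1}^n : A[i] ≥ c^n}`. -/
noncomputable def Tn (α β c : ℝ) (n : ℕ) : Finset (Fin n → Bool) :=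
  Finset.univ.filter (fun i => c ^ n ≤ Real.sqrt (A2 α β i))

/-- `T_n(2^p)`: elements of `T_n` whose first `p+1` coordinates are `(0,…,0,1)`. -/
noncomputable def Tn2p (α β c : ℝ) (n p : ℕ) (hp : p < n) : Finset (Fin n → Bool) :=
  (Tn α β c n).filter
    (fun i => (∀ j : Fin n, (j : ℕ) < p → i j = false) ∧ i ⟨p, hp⟩ = true)

/-- `𝔍_n^k`: elements of `T_n(2^p)` with exactly `k` ones. -/
noncomputable def Jk (α β c : ℝ) (n p : ℕ) (hp : p < n) (k : ℕ) : Finset (Fin n → Bool) :=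
  (Tn2p α β c n p hp).filter
    (fun i => (Finset.univ.filter (fun ℓ => i ℓ = true)).card = k)

/-- `𝔍_n^k(a)`: labels obtained from elements `u` of `𝔍_n^k` by transposing coordinate `a`
with some coordinate `b ∈ {p+1,…,n}` (0-based: `b ≥ p`) where `u_b = 1`. -/
noncomputable def Jka (α β c : ℝ) (n p : ℕ) (hp : p < n) (k : ℕ) (a : Fin n) :
    Finset (Fin n → Bool) :=
  Finset.image (fun x : (Fin n → Bool) × Fin n => x.1 ∘ Equiv.swap a x.2)
    (((Jk α β c n p hp k) ×ˢ Finset.univ).filter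
      (fun x => p ≤ (x.2 : ℕ) ∧ x.1 x.2 = true))

/-- `B_n^p`: elements of `T_n(2^p)` whose number of ones is `< ε(n-p)`. -/
noncomputable def Bnp (α β c ε : ℝ) (n p : ℕ) (hp : p < n) : Finset (Fin n → Bool) :=
  (Tn2p α β c n p hp).filter
    (fun i => ((Finset.univ.filter (fun ℓ => i ℓ = true)).card : ℝ) < ε * ((n : ℝ) - p))

lemma A2_swap_le {α β : ℝ} (hβ : 0 < β) (hβα : β < α) {n : ℕ} (u : Fin n → Bool)
    (a b : Fin n) (hab : a < b) (ha : u a = false) (hb : u b = true) :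
    A2 α β u ≤ A2 α β (u ∘ Equiv.swap a b) := by
  unfold A2
  apply Finset.sum_le_sum
  intro k _
  have hne : a ≠ b := ne_of_lt hab
  by_cases hka : (a : ℕ) ≤ (k : ℕ)
  · apply Finset.prod_le_prod
    · intro ℓ _; exact sq_nonneg _
    · intro ℓ hℓ
      simp only [mem_filter, mem_univ, true_and] at hℓ
      rcases eq_or_ne ℓ b with h | hlb
      · have hv : (u ∘ Equiv.swap a b) ℓ = u a := by
          rw [h]; simp [Equiv.swap_apply_right]
        rw [hv, ha, h, hb]
        simp [barv]
        nlinarith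
      · have hla : ℓ ≠ a := by
          rintro rfl
          rw [Fin.lt_def] at hℓ
          omega
        have hv : (u ∘ Equiv.swap a b) ℓ = u ℓ := by
          simp [Equiv.swap_apply_of_ne_of_ne hla hlb]
        rw [hv]
  · push_neg at hka
    apply le_of_eq
    apply Finset.prod_equiv (Equiv.swap a b)
    · intro ℓ
      simp only [mem_filter, mem_univ, true_and, Fin.lt_def]
      rcases eq_or_ne ℓ a with rfl | hla
      · rw [Equiv.swap_apply_left]
        rw [Fin.lt_def] at hab
        omega
      · rcases eq_or_ne ℓ b with rfl | hlb
        · rw [Equiv.swap_apply_right]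
          rw [Fin.lt_def] at hab
          omega
        · rw [Equiv.swap_apply_of_ne_of_ne hla hlb]
    · intro ℓ _
      simp


lemma mem_Jk_iff {α β c : ℝ} {n p : ℕ} {hp : p < n} {k : ℕ} {u : Fin n → Bool} :
    u ∈ Jk α β c n p hp k ↔
      u ∈ Tn α β c n ∧ (∀ j : Fin n, (j : ℕ) < p → u j = false) ∧ u ⟨p, hp⟩ = true ∧
        (Finset.univ.filter (fun ℓ => u ℓ = true)).card = k := by
  unfold Jk Tn2p
  simp only [mem_filter]
  tauto

lemma mem_Jka_iff {α β c : ℝ} {n p : ℕ} {hp : p < n} {k : ℕ} {a : Fin n} {v : Fin n → Bool} :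
    v ∈ Jka α β c n p hp k a ↔
      ∃ (u : Fin n → Bool) (b : Fin n), u ∈ Jk α β c n p hp k ∧ p ≤ (b : ℕ) ∧ u b = true ∧ v = u ∘ Equiv.swap a b := by
  unfold Jka
  simp only [mem_image, mem_filter, mem_product, mem_univ, and_true, true_and, Prod.exists]
  constructor
  · rintro ⟨u, b, ⟨hu, hpb, hub⟩, rfl⟩
    exact ⟨u, b, hu, hpb, hub, rfl⟩
  · rintro ⟨u, b, hu, hpb, hub, rfl⟩
    exact ⟨u, b, ⟨hu, hpb, hub⟩, rfl⟩

lemma Jka_props {α β c : ℝ} (hβ : 0 < β) (hβα : β < α) {n p : ℕ} {hp : p < n} {k : ℕ}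
    {a : Fin n} (hap : (a : ℕ) < p) {v : Fin n → Bool} (hv : v ∈ Jka α β c n p hp k a) :
    v ∈ Tn α β c n ∧ v a = true ∧ (∀ j : Fin n, (j : ℕ) < p → j ≠ a → v j = false) ∧
      (Finset.univ.filter (fun ℓ => v ℓ = true)).card = k := by
  obtain ⟨u, b, hu, hpb, hub, rfl⟩ := mem_Jka_iff.mp hv
  obtain ⟨huT, hu0, _, hcard⟩ := mem_Jk_iff.mp hu
  have hab : a < b := by rw [Fin.lt_def]; omega
  have hane : a ≠ b := ne_of_lt hab
  have hua : u a = false := hu0 a hap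
  refine ⟨?_, ?_, ?_, ?_⟩
  · unfold Tn at huT ⊢
    simp only [mem_filter, mem_univ, true_and] at huT ⊢
    exact le_trans huT (Real.sqrt_le_sqrt (A2_swap_le hβ hβα u a b hab hua hub))
  · simp [Equiv.swap_apply_left, hub]
  · intro j hj hja
    have hjb : j ≠ b := by
      rintro rfl; omega
    simp [Equiv.swap_apply_of_ne_of_ne hja hjb, hu0 j hj]
  · have himg : (Finset.univ.filter (fun ℓ => (u ∘ Equiv.swap a b) ℓ = true))
        = (Finset.univ.filter (fun ℓ => u ℓ = true)).image (Equiv.swap a b) := by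
      ext ℓ
      simp only [mem_filter, mem_univ, true_and, mem_image, Function.comp_apply]
      constructor
      · intro h; exact ⟨Equiv.swap a b ℓ, h, Equiv.swap_apply_self a b ℓ⟩
      · rintro ⟨m, hm, rfl⟩; rwa [Equiv.swap_apply_self]
    rw [himg, Finset.card_image_of_injective _ (Equiv.injective _), hcard]

lemma card_filter_le_coord (n p : ℕ) (hp : p < n) :
    (Finset.univ.filter (fun b : Fin n => p ≤ (b : ℕ))).card = n - p := by
  have h : (Finset.univ.filter (fun b : Fin n => p ≤ (b : ℕ))) = Finset.Ici (⟨p, hp⟩ : Fin n) := by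
    ext b
    simp [Fin.le_def]
  rw [h, Fin.card_Ici]

lemma card_filter_lt_coord (n p : ℕ) (hp : p < n) :
    (Finset.univ.filter (fun a : Fin n => (a : ℕ) < p)).card = p := by
  have h : (Finset.univ.filter (fun a : Fin n => (a : ℕ) < p)) = Finset.Iio (⟨p, hp⟩ : Fin n) := by
    ext b
    simp [Fin.lt_def]
  rw [h, Fin.card_Iio]

lemma Jka_card {α β c : ℝ} {n p : ℕ} {hp : p < n} {k : ℕ} {a : Fin n} :
    k * (Jk α β c n p hp k).card ≤ (n - p) * (Jka α β c n p hp k a).card := by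
  set S := ((Jk α β c n p hp k) ×ˢ (Finset.univ : Finset (Fin n))).filter
      (fun x => p ≤ (x.2 : ℕ) ∧ x.1 x.2 = true) with hS
  have hScard : S.card = (Jk α β c n p hp k).card * k := by
    rw [Finset.card_eq_sum_card_fiberwise (f := Prod.fst) (t := Jk α β c n p hp k)
      (fun x hx => by
        rw [mem_coe, mem_filter, mem_product] at hx
        exact hx.1.1)]
    rw [← Finset.sum_const_nat (m := k) ?_]
    intro u hu
    obtain ⟨_, hu0, _, hcard⟩ := mem_Jk_iff.mp hu
    have hfib : S.filter (fun x => x.1 = u) = {u} ×ˢ (Finset.univ.filter (fun b => u b = true)) := by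
      ext ⟨w, b⟩
      simp only [hS, mem_filter, mem_product, mem_singleton, mem_univ, true_and, and_true]
      constructor
      · rintro ⟨⟨_, _, hwb⟩, rfl⟩
        exact ⟨rfl, hwb⟩
      · rintro ⟨rfl, hb⟩
        have hpb : p ≤ (b : ℕ) := by
          by_contra h
          push_neg at h
          rw [hu0 b h] at hb
          exact Bool.false_ne_true hb
        exact ⟨⟨hu, hpb, hb⟩, rfl⟩
    rw [hfib, Finset.card_product, Finset.card_singleton, one_mul, hcard]
  have himg : Jka α β c n p hp k a
      = S.image (fun x : (Fin n → Bool) × Fin n => x.1 ∘ Equiv.swap a x.2) := rfl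
  have hfiber : ∀ v ∈ S.image (fun x : (Fin n → Bool) × Fin n => x.1 ∘ Equiv.swap a x.2),
      (S.filter (fun x => x.1 ∘ Equiv.swap a x.2 = v)).card ≤ n - p := by
    intro v _
    rw [← card_filter_le_coord n p hp]
    apply Finset.card_le_card_of_injOn Prod.snd
    · intro x hx
      rw [mem_coe, mem_filter] at hx
      rw [hS, mem_filter] at hx
      simp only [mem_coe, mem_filter, mem_univ, true_and]
      exact hx.1.2.1
    · intro x hx y hy hxy
      simp only [mem_coe, mem_filter] at hx hy
      have hx1 : x.1 = v ∘ Equiv.swap a x.2 := by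
        funext i
        have := congrFun hx.2 (Equiv.swap a x.2 i)
        simpa [Equiv.swap_apply_self] using this
      have hy1 : y.1 = v ∘ Equiv.swap a y.2 := by
        funext i
        have := congrFun hy.2 (Equiv.swap a y.2 i)
        simpa [Equiv.swap_apply_self] using this
      have : x.1 = y.1 := by rw [hx1, hy1, hxy]
      exact Prod.ext this hxy
  have := Finset.card_le_mul_card_image S (n - p) hfiber
  rw [hScard] at this
  rw [himg]
  calc k * (Jk α β c n p hp k).card = (Jk α β c n p hp k).card * k := Nat.mul_comm _ _
    _ ≤ (n - p) * _ := this

/-- The sets `𝔍_n^k(a)` for `1 ≤ a ≤ p`, `k ≥ (n-p)ε` are pairwise disjoint, disjoint from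
`T_n(2^p)`, contained in `T_n`; consequently
`#(T_n \ T_n(2^p)) ≥ ε p · #(T_n(2^p) \ B_n^p)`. -/
theorem stmt_14 (α β c ε : ℝ) (hβ : 0 < β) (hβα : β < α) (hε : 0 < ε)
    (n p : ℕ) (hp : p < n) :
    (∀ (a a' : Fin n) (k k' : ℕ), (a : ℕ) < p → (a' : ℕ) < p →
      ((n : ℝ) - p) * ε ≤ (k : ℝ) → ((n : ℝ) - p) * ε ≤ (k' : ℝ) →
      (a, k) ≠ (a', k') →
      Disjoint (Jka α β c n p hp k a) (Jka α β c n p hp k' a')) ∧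
    (∀ (a : Fin n) (k : ℕ), (a : ℕ) < p → ((n : ℝ) - p) * ε ≤ (k : ℝ) →
      Disjoint (Jka α β c n p hp k a) (Tn2p α β c n p hp)) ∧
    (∀ (a : Fin n) (k : ℕ), (a : ℕ) < p → ((n : ℝ) - p) * ε ≤ (k : ℝ) →
      Jka α β c n p hp k a ⊆ Tn α β c n) ∧
    ε * (p : ℝ) * (((Tn2p α β c n p hp) \ (Bnp α β c ε n p hp)).card : ℝ)
      ≤ (((Tn α β c n) \ (Tn2p α β c n p hp)).card : ℝ) := by
  have part1 : ∀ (a a' : Fin n) (k k' : ℕ), (a : ℕ) < p → (a' : ℕ) < p →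
      ((n : ℝ) - p) * ε ≤ (k : ℝ) → ((n : ℝ) - p) * ε ≤ (k' : ℝ) →
      (a, k) ≠ (a', k') →
      Disjoint (Jka α β c n p hp k a) (Jka α β c n p hp k' a') := by
    intro a a' k k' ha ha' _ _ hne
    rw [Finset.disjoint_left]
    intro v hv hv'
    obtain ⟨_, hva, hv0, hvc⟩ := Jka_props hβ hβα ha hv
    obtain ⟨_, hva', hv0', hvc'⟩ := Jka_props hβ hβα ha' hv'
    apply hne
    have haa : a = a' := by
      by_contra h
      have hfalse := hv0' a ha h
      rw [hva] at hfalse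
      simp at hfalse
    have hkk : k = k' := hvc.symm.trans hvc'
    rw [haa, hkk]
  have part2 : ∀ (a : Fin n) (k : ℕ), (a : ℕ) < p → ((n : ℝ) - p) * ε ≤ (k : ℝ) →
      Disjoint (Jka α β c n p hp k a) (Tn2p α β c n p hp) := by
    intro a k ha _
    rw [Finset.disjoint_left]
    intro v hv hv'
    obtain ⟨_, hva, _, _⟩ := Jka_props hβ hβα ha hv
    unfold Tn2p at hv'
    rw [mem_filter] at hv'
    have := hv'.2.1 a ha
    rw [hva] at this
    simp at this
  have part3 : ∀ (a : Fin n) (k : ℕ), (a : ℕ) < p → ((n : ℝ) - p) * ε ≤ (k : ℝ) →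
      Jka α β c n p hp k a ⊆ Tn α β c n := by
    intro a k ha _ v hv
    exact (Jka_props hβ hβα ha hv).1
  refine ⟨part1, part2, part3, ?_⟩
  set K := (Finset.range (n + 1)).filter (fun k : ℕ => ((n : ℝ) - p) * ε ≤ (k : ℝ)) with hK
  set Ap := Finset.univ.filter (fun a : Fin n => (a : ℕ) < p) with hAp
  have hApcard : Ap.card = p := card_filter_lt_coord n p hp
  have hcount_le : ∀ v : Fin n → Bool,
      (Finset.univ.filter (fun ℓ => v ℓ = true)).card ≤ n := by
    intro v
    calc (Finset.univ.filter (fun ℓ => v ℓ = true)).card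
        ≤ (Finset.univ : Finset (Fin n)).card := Finset.card_filter_le _ _
      _ = n := by simp
  have hsdiff : Tn2p α β c n p hp \ Bnp α β c ε n p hp
      = K.biUnion (fun k => Jk α β c n p hp k) := by
    ext i
    simp only [mem_sdiff, mem_biUnion, hK, mem_filter, mem_range]
    unfold Bnp Jk
    simp only [mem_filter, not_and, not_lt]
    constructor
    · rintro ⟨hi, hbig⟩
      refine ⟨(Finset.univ.filter (fun ℓ => i ℓ = true)).card,
        ⟨Nat.lt_succ_of_le (hcount_le i), ?_⟩, hi, rfl⟩
      have h2 := hbig hi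
      nlinarith [h2]
    · rintro ⟨k, ⟨_, hke⟩, hi, hcnt⟩
      refine ⟨hi, fun _ => ?_⟩
      rw [hcnt]
      nlinarith [hke]
  have hJkdisj : ∀ k ∈ K, ∀ k' ∈ K, k ≠ k' →
      Disjoint (Jk α β c n p hp k) (Jk α β c n p hp k') := by
    intro k _ k' _ hkk
    rw [Finset.disjoint_left]
    intro i hi hi'
    obtain ⟨_, _, _, h1⟩ := mem_Jk_iff.mp hi
    obtain ⟨_, _, _, h2⟩ := mem_Jk_iff.mp hi'
    exact hkk (h1.symm.trans h2)
  have hcard1 : (((Tn2p α β c n p hp \ Bnp α β c ε n p hp)).card : ℝ)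
      = ∑ k ∈ K, ((Jk α β c n p hp k).card : ℝ) := by
    rw [hsdiff, Finset.card_biUnion hJkdisj]
    push_cast
    rfl
  have hnp : (0 : ℝ) < (n : ℝ) - p := by
    have : (p : ℝ) < n := by exact_mod_cast hp
    linarith
  have perpair : ∀ x ∈ Ap ×ˢ K,
      ε * ((Jk α β c n p hp x.2).card : ℝ) ≤ ((Jka α β c n p hp x.2 x.1).card : ℝ) := by
    intro x hx
    rw [mem_product, hAp, hK] at hx
    simp only [mem_filter, mem_univ, true_and, mem_range] at hx
    obtain ⟨_, _, hke⟩ := hx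
    have hnat := Jka_card (α := α) (β := β) (c := c) (hp := hp) (k := x.2) (a := x.1)
    have hcast : (x.2 : ℝ) * ((Jk α β c n p hp x.2).card : ℝ)
        ≤ ((n : ℝ) - p) * ((Jka α β c n p hp x.2 x.1).card : ℝ) := by
      have := (Nat.cast_le (α := ℝ)).mpr hnat
      push_cast [Nat.cast_sub hp.le] at this
      exact this
    have hJnn : (0 : ℝ) ≤ ((Jk α β c n p hp x.2).card : ℝ) := Nat.cast_nonneg _
    rw [← mul_le_mul_iff_right₀ hnp]
    nlinarith [hke, hJnn, hcast]
  have e1 : ∑ x ∈ Ap ×ˢ K, (ε * ((Jk α β c n p hp x.2).card : ℝ))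
      = (p : ℝ) * (ε * ∑ k ∈ K, ((Jk α β c n p hp k).card : ℝ)) := by
    rw [Finset.sum_product]
    rw [show (∑ x ∈ Ap, ∑ y ∈ K, ε * ((Jk α β c n p hp (x, y).2).card : ℝ))
        = ∑ _x ∈ Ap, ∑ y ∈ K, ε * ((Jk α β c n p hp y).card : ℝ) from rfl]
    rw [Finset.sum_const, hApcard, nsmul_eq_mul, ← Finset.mul_sum]
  have hbU : ((Ap ×ˢ K).biUnion (fun x => Jka α β c n p hp x.2 x.1)).card
      = ∑ x ∈ Ap ×ˢ K, (Jka α β c n p hp x.2 x.1).card := by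
    apply Finset.card_biUnion
    intro x hx y hy hxy
    rw [mem_coe, mem_product, hAp, hK] at hx hy
    simp only [mem_filter, mem_univ, true_and, mem_range] at hx hy
    apply part1 x.1 y.1 x.2 y.2 hx.1 hy.1 hx.2.2 hy.2.2
    intro h
    apply hxy
    rw [Prod.mk.injEq] at h
    exact Prod.ext h.1 h.2
  have hsub : ((Ap ×ˢ K).biUnion (fun x => Jka α β c n p hp x.2 x.1))
      ⊆ (Tn α β c n) \ (Tn2p α β c n p hp) := by
    intro v hv
    rw [mem_biUnion] at hv
    obtain ⟨x, hx, hv⟩ := hv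
    rw [mem_product, hAp, hK] at hx
    simp only [mem_filter, mem_univ, true_and, mem_range] at hx
    rw [mem_sdiff]
    refine ⟨part3 x.1 x.2 hx.1 hx.2.2 hv, ?_⟩
    exact Finset.disjoint_left.mp (part2 x.1 x.2 hx.1 hx.2.2) hv
  calc ε * (p : ℝ) * (((Tn2p α β c n p hp) \ (Bnp α β c ε n p hp)).card : ℝ)
      = ∑ x ∈ Ap ×ˢ K, (ε * ((Jk α β c n p hp x.2).card : ℝ)) := by
        rw [hcard1, e1]; ring
    _ ≤ ∑ x ∈ Ap ×ˢ K, ((Jka α β c n p hp x.2 x.1).card : ℝ) :=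
        Finset.sum_le_sum perpair
    _ = (((Ap ×ˢ K).biUnion (fun x => Jka α β c n p hp x.2 x.1)).card : ℝ) := by
        rw [hbU]; push_cast; rfl
    _ ≤ (((Tn α β c n) \ (Tn2p α β c n p hp)).card : ℝ) := by
        exact_mod_cast Nat.cast_le.mpr (Finset.card_le_card hsub)
end

section
/- Upper bound on large local densities (strictly stable case): for 0 < β ≤ α < 1 and any x ≥ 0, limsup_{n→∞} (1/n) log Z_n([x√n, ∞)) ≤ log 2 - x²(1-α²)/2 almost surely. -/
open MeasureTheory ProbabilityTheory Filter Real
open scoped ENNReal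

/-- The number of individuals of generation `n` of the BAR process whose value is `≥ a`. -/
noncomputable def Zcount {Ω : Type*} (X : ℕ → Ω → ℝ) (n : ℕ) (a : ℝ) (ω : Ω) : ℕ :=
  ((Finset.Ico (2 ^ n) (2 ^ (n + 1))).filter (fun i => a ≤ X i ω)).card

section Aux

lemma lintegral_exp_gaussianReal (t : ℝ) :
    ∫⁻ y, ENNReal.ofReal (Real.exp (t * y)) ∂(gaussianReal 0 1)
      = ENNReal.ofReal (Real.exp (t ^ 2 / 2)) := by
  rw [gaussianReal_of_var_ne_zero 0 one_ne_zero,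
    lintegral_withDensity_eq_lintegral_mul _ (measurable_gaussianPDF 0 1)
      (by fun_prop)]
  have hpt : ∀ y : ℝ, ((gaussianPDF 0 1) * fun y => ENNReal.ofReal (Real.exp (t * y))) y
      = ENNReal.ofReal (Real.exp (t ^ 2 / 2)) * gaussianPDF t 1 y := by
    intro y
    simp only [Pi.mul_apply, gaussianPDF, gaussianPDFReal, NNReal.coe_one]
    rw [← ENNReal.ofReal_mul (by positivity), ← ENNReal.ofReal_mul (by positivity)]
    congr 1
    rw [mul_assoc _ (rexp _), ← Real.exp_add, mul_comm (rexp (t ^ 2 / 2)),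
      mul_assoc _ (rexp _), ← Real.exp_add]
    congr 2
    ring
  rw [lintegral_congr hpt, lintegral_const_mul _ (measurable_gaussianPDF t 1),
    lintegral_gaussianPDF_eq_one t one_ne_zero, mul_one]

lemma lintegral_exp_fst_gaussian2 (ρ t : ℝ) :
    ∫⁻ z, ENNReal.ofReal (Real.exp (t * z.1)) ∂(gaussian2 ρ)
      = ENNReal.ofReal (Real.exp (t ^ 2 / 2)) := by
  rw [gaussian2, lintegral_map (by fun_prop) (by fun_prop)]
  simp only
  rw [← lintegral_map (f := fun y => ENNReal.ofReal (Real.exp (t * y))) (by fun_prop)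
    measurable_fst, Measure.map_fst_prod]
  simp [lintegral_exp_gaussianReal]

lemma lintegral_exp_snd_gaussian2 (ρ t : ℝ) (hρ : ρ ^ 2 ≤ 1) :
    ∫⁻ z, ENNReal.ofReal (Real.exp (t * z.2)) ∂(gaussian2 ρ)
      = ENNReal.ofReal (Real.exp (t ^ 2 / 2)) := by
  rw [gaussian2, lintegral_map (by fun_prop) (by fun_prop)]
  simp only
  have hpt : ∀ p : ℝ × ℝ, ENNReal.ofReal (rexp (t * (ρ * p.1 + Real.sqrt (1 - ρ ^ 2) * p.2)))
      = ENNReal.ofReal (rexp ((t * ρ) * p.1))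
        * ENNReal.ofReal (rexp ((t * Real.sqrt (1 - ρ ^ 2)) * p.2)) := by
    intro p
    rw [← ENNReal.ofReal_mul (by positivity), ← Real.exp_add]
    ring_nf
  have hprod := lintegral_prod_mul (μ := gaussianReal 0 1) (ν := gaussianReal 0 1)
    (f := fun y => ENNReal.ofReal (rexp (t * ρ * y)))
    (g := fun y => ENNReal.ofReal (rexp (t * Real.sqrt (1 - ρ ^ 2) * y)))
    (by fun_prop) (by fun_prop)
  rw [lintegral_congr hpt, hprod,
    lintegral_exp_gaussianReal, lintegral_exp_gaussianReal,
    ← ENNReal.ofReal_mul (by positivity), ← Real.exp_add]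
  congr 2
  have h1 : Real.sqrt (1 - ρ ^ 2) ^ 2 = 1 - ρ ^ 2 := Real.sq_sqrt (by linarith)
  nlinarith [h1]

/-- Prepend a random variable (duplicated into a pair) to a family. -/
def consFam {Ω : Type*} (W : Ω → ℝ) (P : ℕ → Ω → ℝ × ℝ) : ℕ → Ω → ℝ × ℝ
  | 0 => fun ω => (W ω, W ω)
  | (k+1) => P k

variable {Ω : Type*} [MeasureSpace Ω] [IsProbabilityMeasure (ℙ : Measure Ω)]

lemma iIndepFun_consFam {W : Ω → ℝ} {P : ℕ → Ω → ℝ × ℝ}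
    (hiid : iIndepFun P ℙ)
    (hind : IndepFun W (fun ω => fun k => P k ω) ℙ) :
    iIndepFun (consFam W P) ℙ := by
  have main : ∀ (S : Finset ℕ), 0 ∉ S → ∀ (sets : ℕ → Set (ℝ × ℝ)),
      (⋂ i ∈ S, consFam W P i ⁻¹' sets i) = ⋂ j ∈ S.image Nat.pred, P j ⁻¹' sets (j + 1) := by
    intro S h0 sets
    ext ω
    simp only [Set.mem_iInter, Finset.mem_image]
    constructor
    · rintro h j ⟨i, hiS, rfl⟩
      obtain ⟨j, rfl⟩ := Nat.exists_eq_succ_of_ne_zero (fun h' => h0 (h' ▸ hiS) : i ≠ 0)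
      simpa [consFam] using h _ hiS
    · intro h i hiS
      obtain ⟨j, rfl⟩ := Nat.exists_eq_succ_of_ne_zero (fun h' => h0 (h' ▸ hiS) : i ≠ 0)
      have := h j ⟨j + 1, hiS, rfl⟩
      simpa [consFam] using this
  have injS : ∀ (S : Finset ℕ), 0 ∉ S → ∀ x ∈ S, ∀ y ∈ S, Nat.pred x = Nat.pred y → x = y := by
    intro S h0 a ha b hb hab
    have ha' : a ≠ 0 := fun h' => h0 (h' ▸ ha)
    have hb' : b ≠ 0 := fun h' => h0 (h' ▸ hb)
    simp only [Nat.pred_eq_sub_one] at hab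
    omega
  have base : ∀ (S : Finset ℕ), 0 ∉ S → ∀ (sets : ℕ → Set (ℝ × ℝ)),
      (∀ i ∈ S, MeasurableSet (sets i)) →
      ℙ (⋂ i ∈ S, consFam W P i ⁻¹' sets i) = ∏ i ∈ S, ℙ (consFam W P i ⁻¹' sets i) := by
    intro S h0 sets hsets
    rw [main S h0 sets]
    rw [hiid.measure_inter_preimage_eq_mul (S.image Nat.pred) (sets := fun j => sets (j + 1))
      (fun j hj => by
        obtain ⟨i, hiS, rfl⟩ := Finset.mem_image.mp hj
        obtain ⟨j, rfl⟩ := Nat.exists_eq_succ_of_ne_zero (fun h' => h0 (h' ▸ hiS) : i ≠ 0)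
        simpa using hsets _ hiS)]
    rw [Finset.prod_image (injS S h0)]
    refine Finset.prod_congr rfl fun i hiS => ?_
    obtain ⟨j, rfl⟩ := Nat.exists_eq_succ_of_ne_zero (fun h' => h0 (h' ▸ hiS) : i ≠ 0)
    simp only [Nat.pred_succ]
    rfl
  rw [iIndepFun_iff_measure_inter_preimage_eq_mul]
  intro S sets hsets
  by_cases h0 : 0 ∈ S
  · set S' := S.erase 0 with hS'
    have h0' : 0 ∉ S' := Finset.notMem_erase 0 S
    have hSin : S = insert 0 S' := (Finset.insert_erase h0).symm
    have hsplit : (⋂ i ∈ S, consFam W P i ⁻¹' sets i)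
        = consFam W P 0 ⁻¹' sets 0 ∩ ⋂ i ∈ S', consFam W P i ⁻¹' sets i := by
      rw [hSin, Finset.set_biInter_insert]
    have hhead : consFam W P 0 ⁻¹' sets 0 = W ⁻¹' ((fun a : ℝ => (a, a)) ⁻¹' sets 0) := rfl
    have htail : (⋂ i ∈ S', consFam W P i ⁻¹' sets i)
        = (fun ω => fun k => P k ω) ⁻¹'
          (⋂ i ∈ S', (fun q : ℕ → ℝ × ℝ => q (Nat.pred i)) ⁻¹' sets i) := by
      rw [Set.preimage_iInter₂]
      refine Set.iInter₂_congr fun i hiS => ?_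
      obtain ⟨j, rfl⟩ := Nat.exists_eq_succ_of_ne_zero (fun h' => h0' (h' ▸ hiS) : i ≠ 0)
      simp only [Nat.pred_succ]
      rfl
    have hA : MeasurableSet ((fun a : ℝ => (a, a)) ⁻¹' sets 0) :=
      (measurable_id.prodMk measurable_id) (hsets 0 h0)
    have hC : MeasurableSet (⋂ i ∈ S', (fun q : ℕ → ℝ × ℝ => q (Nat.pred i)) ⁻¹' sets i) :=
      MeasurableSet.biInter (Finset.countable_toSet S')
        (fun i hiS => (measurable_pi_apply _) (hsets i (Finset.mem_of_mem_erase hiS)))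
    have hfac := hind.measure_inter_preimage_eq_mul _ _ hA hC
    rw [hsplit, hhead, htail, hfac, ← htail,
      base S' h0' sets (fun i hiS => hsets i (Finset.mem_of_mem_erase hiS))]
    rw [hSin, Finset.prod_insert (Finset.notMem_erase 0 S), ← hhead]
  · exact base S h0 sets hsets

lemma ereal_le_of_forall_le_add {a : EReal} {L : ℝ}
    (h : ∀ j : ℕ, a ≤ ((L + ((j : ℝ) + 1)⁻¹ : ℝ) : EReal)) : a ≤ (L : EReal) := by
  induction a using EReal.rec with
  | bot => exact bot_le
  | coe c =>
    rw [EReal.coe_le_coe_iff]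
    have ht : Filter.Tendsto (fun j : ℕ => L + ((j : ℝ) + 1)⁻¹) atTop (nhds L) := by
      have := tendsto_one_div_add_atTop_nhds_zero_nat (𝕜 := ℝ)
      simpa [one_div] using tendsto_const_nhds.add this
    exact ge_of_tendsto' ht (fun j => EReal.coe_le_coe_iff.mp (h j))
  | top =>
    exact absurd (top_le_iff.mp (h 0)) (EReal.coe_ne_top _)

end Aux

set_option maxHeartbeats 2000000 in
/-- Upper bound on large local densities in the strictly stable case `0 < β ≤ α < 1`:
for any `x ≥ 0`, `limsup (1/n) log Z_n([x√n, ∞)) ≤ log 2 - x²(1-α²)/2` almost surely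
(with the convention `log 0 = -∞`, encoded in `EReal`). -/
theorem stmt_16
    {Ω : Type*} [MeasureSpace Ω] [IsProbabilityMeasure (ℙ : Measure Ω)]
    (α β ρ : ℝ) (hρ : ρ ∈ Set.Ioo (-1 : ℝ) 1)
    (hβ : 0 < β) (hβα : β ≤ α) (hα : α < 1)
    (X η : ℕ → Ω → ℝ)
    (hXmeas : ∀ i, Measurable (X i)) (hηmeas : ∀ i, Measurable (η i))
    (hXrec : ∀ k, 1 ≤ k → ∀ ω,
      X (2 * k) ω = α * X k ω + η (2 * k) ω ∧
      X (2 * k + 1) ω = β * X k ω + η (2 * k + 1) ω)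
    (hηiid : iIndepFun
      (fun k ω => (η (2 * (k + 1)) ω, η (2 * (k + 1) + 1) ω)) ℙ)
    (hηlaw : ∀ k, Measure.map (fun ω => (η (2 * (k + 1)) ω, η (2 * (k + 1) + 1) ω)) ℙ
      = gaussian2 ρ)
    (hηX1 : IndepFun (X 1)
      (fun ω => fun k : ℕ => (η (2 * (k + 1)) ω, η (2 * (k + 1) + 1) ω)) ℙ)
    (x : ℝ) (hx : 0 ≤ x) :
    ∀ᵐ ω ∂ℙ, Filter.limsup
        (fun n : ℕ => if Zcount X n (x * Real.sqrt n) ω = 0 then (⊥ : EReal)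
          else ((Real.log (Zcount X n (x * Real.sqrt n) ω) / n : ℝ) : EReal))
        atTop
      ≤ ((Real.log 2 - x ^ 2 * (1 - α ^ 2) / 2 : ℝ) : EReal) := by
  -- basic positivity facts
  have hαpos : 0 < α := lt_of_lt_of_le hβ hβα
  have h1α : 0 < 1 - α ^ 2 := by nlinarith
  set S : ℝ := (1 - α ^ 2)⁻¹ with hSdef
  have hSpos : 0 < S := inv_pos.mpr h1α
  have hS1 : (1 - α ^ 2) * S = 1 := mul_inv_cancel₀ h1α.ne'
  set L : ℝ := Real.log 2 - x ^ 2 * (1 - α ^ 2) / 2 with hLdef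
  -- independence structure
  set P : ℕ → Ω → ℝ × ℝ := fun k ω => (η (2 * (k + 1)) ω, η (2 * (k + 1) + 1) ω) with hPdef
  have hPmeas : ∀ k, Measurable (P k) := fun k => (hηmeas _).prodMk (hηmeas _)
  set G : ℕ → Ω → ℝ × ℝ := consFam (X 1) P with hGdef
  have hGmeas : ∀ i, Measurable (G i) := by
    rintro (_ | i)
    · exact (hXmeas 1).prodMk (hXmeas 1)
    · exact hPmeas i
  have hGiid : iIndepFun G ℙ :=
    iIndepFun_consFam hηiid hηX1
  set msG : ℕ → MeasurableSpace Ω :=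
    fun i => MeasurableSpace.comap (G i) inferInstance with hmsGdef
  set F : ℕ → MeasurableSpace Ω := fun k => ⨆ i ∈ {i : ℕ | i ≤ k}, msG i with hFdef
  have hmsGle : ∀ i, msG i ≤ (inferInstance : MeasurableSpace Ω) := fun i => (hGmeas i).comap_le
  have hFle : ∀ k, F k ≤ (inferInstance : MeasurableSpace Ω) := fun k =>
    iSup₂_le fun i _ => hmsGle i
  have hFmono : ∀ {j k : ℕ}, j ≤ k → F j ≤ F k := fun {j k} hjk =>
    biSup_mono fun i hi => le_trans hi hjk
  have hGmsG : ∀ i, Measurable[msG i] (G i) := fun i => Measurable.of_comap_le le_rfl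
  have hmsGF : ∀ i k, i ≤ k → msG i ≤ F k := fun i k hik => le_biSup _ hik
  have hindep : ∀ k, Indep (msG (k + 1)) (F k) ℙ := by
    intro k
    have hdisj : Disjoint ({k + 1} : Set ℕ) {i : ℕ | i ≤ k} := by
      simp only [Set.disjoint_left, Set.mem_singleton_iff, Set.mem_setOf_eq]
      rintro a rfl
      omega
    have h := indep_iSup_of_disjoint hmsGle hGiid.iIndep hdisj
    simpa [hFdef] using h
  -- measurability of X along the filtration
  have hXF : ∀ m : ℕ, Measurable[F m] (X (m + 1)) := by
    intro m
    induction m using Nat.strong_induction_on with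
    | _ m ih =>
      rcases Nat.eq_zero_or_pos m with hm | hm
      · subst hm
        exact measurable_fst.comp ((hGmsG 0).mono (hmsGF 0 0 le_rfl) le_rfl)
      · rcases Nat.even_or_odd (m + 1) with ⟨k, hk⟩ | ⟨k, hk⟩
        · have hk1 : 1 ≤ k := by omega
          have hXeq : X (m + 1) = fun ω => α * X k ω + η (2 * k) ω := by
            funext ω
            rw [show m + 1 = 2 * k by omega]
            exact (hXrec k hk1 ω).1
          rw [hXeq]
          have h1 : Measurable[F m] (X k) := by
            have h := ih (k - 1) (by omega)
            rw [show k - 1 + 1 = k by omega] at h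
            exact h.mono (hFmono (by omega)) le_rfl
          have h2 : Measurable[F m] (η (2 * k)) := by
            obtain ⟨j, rfl⟩ := Nat.exists_eq_succ_of_ne_zero (by omega : k ≠ 0)
            have h : Measurable[msG (j + 1)] (fun ω => (G (j + 1) ω).1) :=
              measurable_fst.comp (hGmsG (j + 1))
            have h' : (fun ω => (G (j + 1) ω).1) = η (2 * (j + 1)) := rfl
            rw [h'] at h
            exact h.mono (hmsGF (j + 1) m (by omega)) le_rfl
          exact (measurable_const.mul h1).add h2
        · have hk1 : 1 ≤ k := by omega
          have hXeq : X (m + 1) = fun ω => β * X k ω + η (2 * k + 1) ω := by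
            funext ω
            rw [show m + 1 = 2 * k + 1 by omega]
            exact (hXrec k hk1 ω).2
          rw [hXeq]
          have h1 : Measurable[F m] (X k) := by
            have h := ih (k - 1) (by omega)
            rw [show k - 1 + 1 = k by omega] at h
            exact h.mono (hFmono (by omega)) le_rfl
          have h2 : Measurable[F m] (η (2 * k + 1)) := by
            obtain ⟨j, rfl⟩ := Nat.exists_eq_succ_of_ne_zero (by omega : k ≠ 0)
            have h : Measurable[msG (j + 1)] (fun ω => (G (j + 1) ω).2) :=
              measurable_snd.comp (hGmsG (j + 1))
            have h' : (fun ω => (G (j + 1) ω).2) = η (2 * (j + 1) + 1) := rfl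
            rw [h'] at h
            rw [show 2 * (j + 1) + 1 = 2 * (j + 1) + 1 from rfl] at h
            exact h.mono (hmsGF (j + 1) m (by omega)) le_rfl
          exact (measurable_const.mul h1).add h2
  -- MGF of the noise variables
  have hρ2 : ρ ^ 2 ≤ 1 := by nlinarith [hρ.1, hρ.2]
  have hmgf_fst : ∀ (j : ℕ) (t : ℝ), ∫⁻ ω, ENNReal.ofReal (rexp (t * η (2 * (j + 1)) ω)) ∂ℙ
      = ENNReal.ofReal (rexp (t ^ 2 / 2)) := by
    intro j t
    have h : ∫⁻ ω, ENNReal.ofReal (rexp (t * η (2 * (j + 1)) ω)) ∂ℙ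
        = ∫⁻ z, ENNReal.ofReal (rexp (t * z.1))
            ∂(Measure.map (fun ω => (η (2 * (j + 1)) ω, η (2 * (j + 1) + 1) ω)) ℙ) := by
      rw [lintegral_map (by fun_prop) ((hηmeas _).prodMk (hηmeas _))]
    rw [h, hηlaw j, lintegral_exp_fst_gaussian2]
  have hmgf_snd : ∀ (j : ℕ) (t : ℝ), ∫⁻ ω, ENNReal.ofReal (rexp (t * η (2 * (j + 1) + 1) ω)) ∂ℙ
      = ENNReal.ofReal (rexp (t ^ 2 / 2)) := by
    intro j t
    have h : ∫⁻ ω, ENNReal.ofReal (rexp (t * η (2 * (j + 1) + 1) ω)) ∂ℙ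
        = ∫⁻ z, ENNReal.ofReal (rexp (t * z.2))
            ∂(Measure.map (fun ω => (η (2 * (j + 1)) ω, η (2 * (j + 1) + 1) ω)) ℙ) := by
      rw [lintegral_map (by fun_prop) ((hηmeas _).prodMk (hηmeas _))]
    rw [h, hηlaw j, lintegral_exp_snd_gaussian2 ρ t hρ2]
  -- conditional factorization step
  have hstep_fst : ∀ (j : ℕ) (t : ℝ) (Y : Ω → ℝ≥0∞), Measurable[F j] Y →
      ∫⁻ ω, ENNReal.ofReal (rexp (t * η (2 * (j + 1)) ω)) * Y ω ∂ℙ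
        = ENNReal.ofReal (rexp (t ^ 2 / 2)) * ∫⁻ ω, Y ω ∂ℙ := by
    intro j t Y hY
    have hf : Measurable[msG (j + 1)] (fun ω => ENNReal.ofReal (rexp (t * η (2 * (j + 1)) ω))) := by
      have h : Measurable[msG (j + 1)] (η (2 * (j + 1))) := by
        have h0 : Measurable[msG (j + 1)] (fun ω => (G (j + 1) ω).1) :=
          measurable_fst.comp (hGmsG (j + 1))
        exact h0
      exact (h.const_mul t).exp.ennreal_ofReal
    rw [lintegral_mul_eq_lintegral_mul_lintegral_of_independent_measurableSpace
      (hmsGle (j + 1)) (hFle j) (hindep j) hf hY, hmgf_fst j t]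
  have hstep_snd : ∀ (j : ℕ) (t : ℝ) (Y : Ω → ℝ≥0∞), Measurable[F j] Y →
      ∫⁻ ω, ENNReal.ofReal (rexp (t * η (2 * (j + 1) + 1) ω)) * Y ω ∂ℙ
        = ENNReal.ofReal (rexp (t ^ 2 / 2)) * ∫⁻ ω, Y ω ∂ℙ := by
    intro j t Y hY
    have hf : Measurable[msG (j + 1)]
        (fun ω => ENNReal.ofReal (rexp (t * η (2 * (j + 1) + 1) ω))) := by
      have h : Measurable[msG (j + 1)] (η (2 * (j + 1) + 1)) := by
        have h0 : Measurable[msG (j + 1)] (fun ω => (G (j + 1) ω).2) :=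
          measurable_snd.comp (hGmsG (j + 1))
        exact h0
      exact (h.const_mul t).exp.ennreal_ofReal
    rw [lintegral_mul_eq_lintegral_mul_lintegral_of_independent_measurableSpace
      (hmsGle (j + 1)) (hFle j) (hindep j) hf hY, hmgf_snd j t]
  -- the per-vertex exponential moment bound
  have hB : ∀ (M : ℝ), 0 ≤ M → ∀ (k : ℕ), ∀ (t : ℝ), 0 ≤ t → 1 ≤ k →
      ∫⁻ ω, ENNReal.ofReal (rexp (t * X k ω)) * ({ω | |X 1 ω| ≤ M}.indicator 1 ω) ∂ℙ
        ≤ ENNReal.ofReal (rexp (t ^ 2 * S / 2 + t * M)) := by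
    intro M hM
    have hIsetF : MeasurableSet[F 0] {ω | |X 1 ω| ≤ M} := by
      have hX1 : Measurable[F 0] (X 1) := hXF 0
      exact (measurable_abs.comp hX1) measurableSet_Iic
    have hImeasF : Measurable[F 0] ({ω | |X 1 ω| ≤ M}.indicator (1 : Ω → ℝ≥0∞)) :=
      measurable_const.indicator hIsetF
    intro k
    induction k using Nat.strong_induction_on with
    | _ k ih =>
      intro t ht hk
      rcases eq_or_lt_of_le hk with h1 | h1
      · -- base case k = 1
        rw [← h1]
        have hpt : ∀ ω, ENNReal.ofReal (rexp (t * X 1 ω))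
            * ({ω | |X 1 ω| ≤ M}.indicator (1 : Ω → ℝ≥0∞) ω)
            ≤ ENNReal.ofReal (rexp (t * M)) := by
          intro ω
          by_cases hω : ω ∈ {ω | |X 1 ω| ≤ M}
          · rw [Set.indicator_of_mem hω, Pi.one_apply, mul_one]
            refine ENNReal.ofReal_le_ofReal (Real.exp_le_exp.mpr ?_)
            have := hω
            simp only [Set.mem_setOf_eq] at this
            have hX1le : X 1 ω ≤ M := le_trans (le_abs_self _) this
            exact mul_le_mul_of_nonneg_left hX1le ht
          · rw [Set.indicator_of_notMem hω, mul_zero]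
            exact zero_le
        calc ∫⁻ ω, ENNReal.ofReal (rexp (t * X 1 ω))
              * ({ω | |X 1 ω| ≤ M}.indicator (1 : Ω → ℝ≥0∞) ω) ∂ℙ
            ≤ ∫⁻ _, ENNReal.ofReal (rexp (t * M)) ∂ℙ := lintegral_mono hpt
          _ = ENNReal.ofReal (rexp (t * M)) := by simp
          _ ≤ ENNReal.ofReal (rexp (t ^ 2 * S / 2 + t * M)) := by
              refine ENNReal.ofReal_le_ofReal (Real.exp_le_exp.mpr ?_)
              nlinarith [sq_nonneg t, hSpos.le]
      · -- inductive case k ≥ 2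
        rcases Nat.even_or_odd k with ⟨m, hm⟩ | ⟨m, hm⟩
        · have hm1 : 1 ≤ m := by omega
          obtain ⟨j, hj⟩ := Nat.exists_eq_succ_of_ne_zero (by omega : m ≠ 0)
          have hXeq : ∀ ω, X k ω = α * X m ω + η (2 * m) ω := by
            intro ω
            rw [show k = 2 * m by omega]
            exact (hXrec m hm1 ω).1
          have hpt : ∀ ω, ENNReal.ofReal (rexp (t * X k ω))
              * ({ω | |X 1 ω| ≤ M}.indicator (1 : Ω → ℝ≥0∞) ω)
              = ENNReal.ofReal (rexp (t * η (2 * m) ω))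
                * (ENNReal.ofReal (rexp ((t * α) * X m ω))
                  * ({ω | |X 1 ω| ≤ M}.indicator (1 : Ω → ℝ≥0∞) ω)) := by
            intro ω
            rw [hXeq ω, ← mul_assoc, ← ENNReal.ofReal_mul (by positivity), ← Real.exp_add]
            ring_nf
          have hYmeas : Measurable[F j]
              (fun ω => ENNReal.ofReal (rexp ((t * α) * X m ω))
                * ({ω | |X 1 ω| ≤ M}.indicator (1 : Ω → ℝ≥0∞) ω)) := by
            have hXm : Measurable[F j] (X m) := by
              have h := hXF j
              rw [show j + 1 = m by omega] at h
              exact h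
            exact ((hXm.const_mul _).exp.ennreal_ofReal).mul
              (hImeasF.mono (hFmono (Nat.zero_le j)) le_rfl)
          have hstep := hstep_fst j t _ hYmeas
          rw [show 2 * (j + 1) = 2 * m by omega] at hstep
          calc ∫⁻ ω, ENNReal.ofReal (rexp (t * X k ω))
                * ({ω | |X 1 ω| ≤ M}.indicator (1 : Ω → ℝ≥0∞) ω) ∂ℙ
              = ENNReal.ofReal (rexp (t ^ 2 / 2))
                * ∫⁻ ω, ENNReal.ofReal (rexp ((t * α) * X m ω))
                  * ({ω | |X 1 ω| ≤ M}.indicator (1 : Ω → ℝ≥0∞) ω) ∂ℙ := by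
                rw [lintegral_congr hpt]; exact hstep
            _ ≤ ENNReal.ofReal (rexp (t ^ 2 / 2))
                * ENNReal.ofReal (rexp ((t * α) ^ 2 * S / 2 + (t * α) * M)) := by
                gcongr
                exact ih m (by omega) (t * α) (mul_nonneg ht hαpos.le) hm1
            _ ≤ ENNReal.ofReal (rexp (t ^ 2 * S / 2 + t * M)) := by
                rw [← ENNReal.ofReal_mul (by positivity), ← Real.exp_add]
                refine ENNReal.ofReal_le_ofReal (Real.exp_le_exp.mpr ?_)
                have hαS : t ^ 2 / 2 + (t * α) ^ 2 * S / 2 = t ^ 2 * S / 2 := by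
                  linear_combination (-(t ^ 2 / 2)) * hS1
                have hαM : (t * α) * M ≤ t * M :=
                  mul_le_mul_of_nonneg_right (mul_le_of_le_one_right ht hα.le) hM
                linarith
        · have hm1 : 1 ≤ m := by omega
          obtain ⟨j, hj⟩ := Nat.exists_eq_succ_of_ne_zero (by omega : m ≠ 0)
          have hXeq : ∀ ω, X k ω = β * X m ω + η (2 * m + 1) ω := by
            intro ω
            rw [show k = 2 * m + 1 by omega]
            exact (hXrec m hm1 ω).2
          have hpt : ∀ ω, ENNReal.ofReal (rexp (t * X k ω))
              * ({ω | |X 1 ω| ≤ M}.indicator (1 : Ω → ℝ≥0∞) ω)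
              = ENNReal.ofReal (rexp (t * η (2 * m + 1) ω))
                * (ENNReal.ofReal (rexp ((t * β) * X m ω))
                  * ({ω | |X 1 ω| ≤ M}.indicator (1 : Ω → ℝ≥0∞) ω)) := by
            intro ω
            rw [hXeq ω, ← mul_assoc, ← ENNReal.ofReal_mul (by positivity), ← Real.exp_add]
            ring_nf
          have hYmeas : Measurable[F j]
              (fun ω => ENNReal.ofReal (rexp ((t * β) * X m ω))
                * ({ω | |X 1 ω| ≤ M}.indicator (1 : Ω → ℝ≥0∞) ω)) := by
            have hXm : Measurable[F j] (X m) := by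
              have h := hXF j
              rw [show j + 1 = m by omega] at h
              exact h
            exact ((hXm.const_mul _).exp.ennreal_ofReal).mul
              (hImeasF.mono (hFmono (Nat.zero_le j)) le_rfl)
          have hstep := hstep_snd j t _ hYmeas
          rw [show 2 * (j + 1) + 1 = 2 * m + 1 by omega] at hstep
          calc ∫⁻ ω, ENNReal.ofReal (rexp (t * X k ω))
                * ({ω | |X 1 ω| ≤ M}.indicator (1 : Ω → ℝ≥0∞) ω) ∂ℙ
              = ENNReal.ofReal (rexp (t ^ 2 / 2))
                * ∫⁻ ω, ENNReal.ofReal (rexp ((t * β) * X m ω))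
                  * ({ω | |X 1 ω| ≤ M}.indicator (1 : Ω → ℝ≥0∞) ω) ∂ℙ := by
                rw [lintegral_congr hpt]; exact hstep
            _ ≤ ENNReal.ofReal (rexp (t ^ 2 / 2))
                * ENNReal.ofReal (rexp ((t * β) ^ 2 * S / 2 + (t * β) * M)) := by
                gcongr
                exact ih m (by omega) (t * β) (mul_nonneg ht hβ.le) hm1
            _ ≤ ENNReal.ofReal (rexp (t ^ 2 * S / 2 + t * M)) := by
                rw [← ENNReal.ofReal_mul (by positivity), ← Real.exp_add]
                refine ENNReal.ofReal_le_ofReal (Real.exp_le_exp.mpr ?_)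
                have hba : (t * β) ^ 2 * S ≤ t ^ 2 * α ^ 2 * S := by
                  have hb2' : β ^ 2 ≤ α ^ 2 := by nlinarith
                  have hb2 : (t * β) ^ 2 ≤ t ^ 2 * α ^ 2 := by nlinarith [sq_nonneg t, hb2']
                  exact mul_le_mul_of_nonneg_right hb2 hSpos.le
                have hαS : t ^ 2 / 2 + t ^ 2 * α ^ 2 * S / 2 = t ^ 2 * S / 2 := by
                  linear_combination (-(t ^ 2 / 2)) * hS1
                have hβM : (t * β) * M ≤ t * M :=
                  mul_le_mul_of_nonneg_right
                    (mul_le_of_le_one_right ht ((hβα.trans hα.le))) hM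
                linarith
  -- per-generation tail estimate
  have hAbound : ∀ (M : ℝ), 0 ≤ M → ∀ (ε : ℝ), 0 < ε → ∀ n : ℕ,
      ℙ {ω | |X 1 ω| ≤ M ∧ rexp (n * (L + ε)) ≤ (Zcount X n (x * Real.sqrt n) ω : ℝ)}
        ≤ ENNReal.ofReal (rexp ((x * (1 - α ^ 2) * M) ^ 2 / (2 * ε)))
          * ENNReal.ofReal (rexp (-(ε / 2))) ^ n := by
    intro M hM ε hε n
    set c : ℝ := x * (1 - α ^ 2) * M with hcdef
    have hc : 0 ≤ c := mul_nonneg (mul_nonneg hx h1α.le) hM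
    set a : ℝ := x * Real.sqrt n with hadef
    set t : ℝ := x * (1 - α ^ 2) * Real.sqrt n with htdef
    have ht : 0 ≤ t := mul_nonneg (mul_nonneg hx h1α.le) (Real.sqrt_nonneg _)
    set Aset : Set Ω := {ω | |X 1 ω| ≤ M ∧ rexp (n * (L + ε)) ≤ (Zcount X n a ω : ℝ)}
      with hAdef
    have hZmeas : Measurable (fun ω => Zcount X n a ω) := by
      have : (fun ω => Zcount X n a ω)
          = fun ω => ∑ i ∈ Finset.Ico (2 ^ n) (2 ^ (n + 1)), if a ≤ X i ω then 1 else 0 := by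
        funext ω
        rw [Zcount, Finset.card_filter]
      rw [this]
      exact Finset.measurable_sum _ fun i _ =>
        Measurable.ite (measurableSet_le measurable_const (hXmeas i))
          measurable_const measurable_const
    have hAmeas : MeasurableSet Aset := by
      refine MeasurableSet.inter ?_ ?_
      · exact (measurable_abs.comp (hXmeas 1)) measurableSet_Iic
      · exact measurableSet_le measurable_const
          ((measurable_from_top.comp hZmeas : Measurable fun ω => (Zcount X n a ω : ℝ)))
    have h1 : ENNReal.ofReal (rexp (n * (L + ε))) * ℙ Aset
        ≤ ∫⁻ ω, (Zcount X n a ω : ℝ≥0∞) * ({ω | |X 1 ω| ≤ M}.indicator 1 ω) ∂ℙ := by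
      rw [← lintegral_indicator_const hAmeas]
      refine lintegral_mono fun ω => ?_
      by_cases hω : ω ∈ Aset
      · rw [Set.indicator_of_mem hω,
          Set.indicator_of_mem (show ω ∈ {ω | |X 1 ω| ≤ M} from hω.1), Pi.one_apply, mul_one]
        calc ENNReal.ofReal (rexp (n * (L + ε)))
            ≤ ENNReal.ofReal ((Zcount X n a ω : ℝ)) := ENNReal.ofReal_le_ofReal hω.2
          _ = (Zcount X n a ω : ℝ≥0∞) := ENNReal.ofReal_natCast _
      · rw [Set.indicator_of_notMem hω]
        exact zero_le
    have h2 : ∫⁻ ω, (Zcount X n a ω : ℝ≥0∞) * ({ω | |X 1 ω| ≤ M}.indicator 1 ω) ∂ℙ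
        ≤ (2 ^ n : ℝ≥0∞) * (ENNReal.ofReal (rexp (-(t * a)))
            * ENNReal.ofReal (rexp (t ^ 2 * S / 2 + t * M))) := by
      have hptZ : ∀ ω, (Zcount X n a ω : ℝ≥0∞) * ({ω | |X 1 ω| ≤ M}.indicator 1 ω)
          = ∑ i ∈ Finset.Ico (2 ^ n) (2 ^ (n + 1)),
              (if a ≤ X i ω then (1 : ℝ≥0∞) else 0)
                * ({ω | |X 1 ω| ≤ M}.indicator 1 ω) := by
        intro ω
        rw [Zcount, Finset.card_filter, ← Finset.sum_mul]
        congr 1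
        push_cast
        exact Finset.sum_congr rfl fun i _ => by split <;> simp
      have hterm : ∀ i ∈ Finset.Ico (2 ^ n) (2 ^ (n + 1)),
          ∫⁻ ω, (if a ≤ X i ω then (1 : ℝ≥0∞) else 0)
            * ({ω | |X 1 ω| ≤ M}.indicator 1 ω) ∂ℙ
          ≤ ENNReal.ofReal (rexp (-(t * a))) * ENNReal.ofReal (rexp (t ^ 2 * S / 2 + t * M)) := by
        intro i hi
        have hi1 : 1 ≤ i := le_trans (Nat.one_le_two_pow) (Finset.mem_Ico.mp hi).1
        have hpt : ∀ ω, (if a ≤ X i ω then (1 : ℝ≥0∞) else 0)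
            * ({ω | |X 1 ω| ≤ M}.indicator 1 ω)
            ≤ ENNReal.ofReal (rexp (-(t * a)))
              * (ENNReal.ofReal (rexp (t * X i ω)) * ({ω | |X 1 ω| ≤ M}.indicator 1 ω)) := by
          intro ω
          by_cases hia : a ≤ X i ω
          · rw [if_pos hia, ← mul_assoc, ← ENNReal.ofReal_mul (by positivity),
              ← Real.exp_add, ← one_mul ({ω | |X 1 ω| ≤ M}.indicator 1 ω)]
            refine mul_le_mul_left ?_ _
            rw [show (1 : ℝ≥0∞) = ENNReal.ofReal 1 from (ENNReal.ofReal_one).symm]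
            refine ENNReal.ofReal_le_ofReal ?_
            rw [← Real.exp_zero]
            refine Real.exp_le_exp.mpr ?_
            have h0t : 0 ≤ t * (X i ω - a) := mul_nonneg ht (by linarith)
            nlinarith [h0t]
          · rw [if_neg hia, zero_mul]
            exact zero_le
        calc ∫⁻ ω, (if a ≤ X i ω then (1 : ℝ≥0∞) else 0)
              * ({ω | |X 1 ω| ≤ M}.indicator 1 ω) ∂ℙ
            ≤ ∫⁻ ω, ENNReal.ofReal (rexp (-(t * a)))
              * (ENNReal.ofReal (rexp (t * X i ω))
                * ({ω | |X 1 ω| ≤ M}.indicator 1 ω)) ∂ℙ := lintegral_mono hpt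
          _ = ENNReal.ofReal (rexp (-(t * a)))
              * ∫⁻ ω, ENNReal.ofReal (rexp (t * X i ω))
                * ({ω | |X 1 ω| ≤ M}.indicator 1 ω) ∂ℙ := by
              rw [lintegral_const_mul]
              exact (((hXmeas i).const_mul t).exp.ennreal_ofReal).mul
                (measurable_one.indicator ((measurable_abs.comp (hXmeas 1)) measurableSet_Iic))
          _ ≤ ENNReal.ofReal (rexp (-(t * a)))
              * ENNReal.ofReal (rexp (t ^ 2 * S / 2 + t * M)) := by
              exact mul_le_mul_right (hB M hM i t ht hi1) _
      calc ∫⁻ ω, (Zcount X n a ω : ℝ≥0∞) * ({ω | |X 1 ω| ≤ M}.indicator 1 ω) ∂ℙ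
          = ∑ i ∈ Finset.Ico (2 ^ n) (2 ^ (n + 1)),
              ∫⁻ ω, (if a ≤ X i ω then (1 : ℝ≥0∞) else 0)
                * ({ω | |X 1 ω| ≤ M}.indicator 1 ω) ∂ℙ := by
            rw [lintegral_congr hptZ]
            refine lintegral_finset_sum _ fun i _ => ?_
            exact (Measurable.ite (measurableSet_le measurable_const (hXmeas i))
              measurable_const measurable_const).mul
                (measurable_one.indicator ((measurable_abs.comp (hXmeas 1)) measurableSet_Iic))
        _ ≤ ∑ _i ∈ Finset.Ico (2 ^ n) (2 ^ (n + 1)),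
              (ENNReal.ofReal (rexp (-(t * a)))
                * ENNReal.ofReal (rexp (t ^ 2 * S / 2 + t * M))) := Finset.sum_le_sum hterm
        _ = (2 ^ n : ℝ≥0∞) * (ENNReal.ofReal (rexp (-(t * a)))
              * ENNReal.ofReal (rexp (t ^ 2 * S / 2 + t * M))) := by
            rw [Finset.sum_const, Nat.card_Ico]
            rw [show 2 ^ (n + 1) - 2 ^ n = 2 ^ n by rw [pow_succ]; omega]
            rw [nsmul_eq_mul]
            push_cast
            ring
    have h3 : ℙ Aset ≤ ENNReal.ofReal (rexp (-(n * (L + ε))))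
        * ((2 ^ n : ℝ≥0∞) * (ENNReal.ofReal (rexp (-(t * a)))
          * ENNReal.ofReal (rexp (t ^ 2 * S / 2 + t * M)))) := by
      calc ℙ Aset = ENNReal.ofReal (rexp (-(n * (L + ε))))
            * (ENNReal.ofReal (rexp (n * (L + ε))) * ℙ Aset) := by
            rw [← mul_assoc, ← ENNReal.ofReal_mul (by positivity), ← Real.exp_add,
              neg_add_cancel, Real.exp_zero, ENNReal.ofReal_one, one_mul]
        _ ≤ _ := mul_le_mul_right (le_trans h1 h2) _
    refine le_trans h3 ?_
    -- now a purely numeric computation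
    have hsq : Real.sqrt n ^ 2 = (n : ℝ) := Real.sq_sqrt (Nat.cast_nonneg n)
    have hta : t * a = x ^ 2 * (1 - α ^ 2) * n := by
      rw [htdef, hadef]
      linear_combination (x ^ 2 * (1 - α ^ 2)) * hsq
    have ht2 : t ^ 2 * S = x ^ 2 * (1 - α ^ 2) * n := by
      rw [htdef]
      linear_combination (x ^ 2 * (1 - α ^ 2) ^ 2 * S) * hsq
        + (x ^ 2 * (1 - α ^ 2) * (n : ℝ)) * hS1
    have htM : t * M = c * Real.sqrt n := by rw [htdef, hcdef]; ring
    have hfinal : -(n * (L + ε)) + ((n : ℝ) * Real.log 2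
        + (-(t * a) + (t ^ 2 * S / 2 + t * M))) ≤ c ^ 2 / (2 * ε) + (n : ℝ) * (-(ε / 2)) := by
      rw [hta, htM, show t ^ 2 * S / 2 = x ^ 2 * (1 - α ^ 2) * n / 2 by rw [ht2]]
      have hred : -((n : ℝ) * (L + ε)) + ((n : ℝ) * Real.log 2
          + (-(x ^ 2 * (1 - α ^ 2) * n) + (x ^ 2 * (1 - α ^ 2) * n / 2 + c * Real.sqrt n)))
          = -((n : ℝ) * ε) + c * Real.sqrt n := by
        rw [hLdef]; ring
      rw [hred]
      have h2ε : (0 : ℝ) < 2 * ε := by linarith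
      rw [← mul_le_mul_iff_right₀ h2ε]
      have hD : 2 * ε * (c ^ 2 / (2 * ε)) = c ^ 2 := by field_simp
      have hε2n : ε ^ 2 * (n : ℝ) = ε ^ 2 * Real.sqrt n ^ 2 := by rw [hsq]
      nlinarith [sq_nonneg (c - ε * Real.sqrt n), hε2n, hD]
    have h2n : ((2 : ℝ≥0∞) ^ n) = ENNReal.ofReal (rexp ((n : ℝ) * Real.log 2)) := by
      rw [Real.exp_nat_mul, Real.exp_log two_pos,
        ENNReal.ofReal_pow (by norm_num : (0:ℝ) ≤ 2), ENNReal.ofReal_ofNat]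
    have hpow : ENNReal.ofReal (rexp (-(ε / 2))) ^ n
        = ENNReal.ofReal (rexp ((n : ℝ) * (-(ε / 2)))) := by
      rw [Real.exp_nat_mul, ← ENNReal.ofReal_pow (Real.exp_nonneg _)]
    rw [h2n, hpow]
    calc ENNReal.ofReal (rexp (-((n : ℝ) * (L + ε)))) *
          (ENNReal.ofReal (rexp ((n : ℝ) * Real.log 2)) *
            (ENNReal.ofReal (rexp (-(t * a)))
              * ENNReal.ofReal (rexp (t ^ 2 * S / 2 + t * M))))
        = ENNReal.ofReal (rexp (-((n : ℝ) * (L + ε)) + ((n : ℝ) * Real.log 2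
            + (-(t * a) + (t ^ 2 * S / 2 + t * M))))) := by
          conv_rhs => rw [Real.exp_add, ENNReal.ofReal_mul (Real.exp_nonneg _),
            Real.exp_add, ENNReal.ofReal_mul (Real.exp_nonneg _),
            Real.exp_add, ENNReal.ofReal_mul (Real.exp_nonneg _)]
      _ ≤ ENNReal.ofReal (rexp (c ^ 2 / (2 * ε) + (n : ℝ) * (-(ε / 2)))) :=
          ENNReal.ofReal_le_ofReal (Real.exp_le_exp.mpr hfinal)
      _ = ENNReal.ofReal (rexp (c ^ 2 / (2 * ε)))
            * ENNReal.ofReal (rexp ((n : ℝ) * (-(ε / 2)))) := by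
          rw [Real.exp_add, ENNReal.ofReal_mul (Real.exp_nonneg _)]
  -- Borel--Cantelli
  have hae : ∀ (M : ℕ) (j : ℕ), ∀ᵐ ω ∂ℙ, ∀ᶠ n : ℕ in atTop,
      ¬(|X 1 ω| ≤ (M : ℝ) ∧ rexp (n * (L + ((j : ℝ) + 1)⁻¹))
        ≤ (Zcount X n (x * Real.sqrt n) ω : ℝ)) := by
    intro M j
    set ε : ℝ := ((j : ℝ) + 1)⁻¹ with hεdef
    have hε : 0 < ε := by positivity
    have hsum : (∑' n : ℕ, ℙ {ω | |X 1 ω| ≤ (M : ℝ)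
        ∧ rexp (n * (L + ε)) ≤ (Zcount X n (x * Real.sqrt n) ω : ℝ)}) ≠ ⊤ := by
      set K := ENNReal.ofReal (rexp ((x * (1 - α ^ 2) * M) ^ 2 / (2 * ε)))
      set r := ENNReal.ofReal (rexp (-(ε / 2)))
      have hr : r < 1 := by
        rw [show (1 : ℝ≥0∞) = ENNReal.ofReal 1 from (ENNReal.ofReal_one).symm]
        refine (ENNReal.ofReal_lt_ofReal_iff one_pos).mpr ?_
        exact Real.exp_lt_one_iff.mpr (by linarith)
      have hle : (∑' n : ℕ, ℙ {ω | |X 1 ω| ≤ (M : ℝ)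
          ∧ rexp (n * (L + ε)) ≤ (Zcount X n (x * Real.sqrt n) ω : ℝ)})
          ≤ K * (1 - r)⁻¹ := by
        calc _ ≤ ∑' n : ℕ, K * r ^ n :=
              ENNReal.tsum_le_tsum (hAbound M (Nat.cast_nonneg M) ε hε)
          _ = K * ∑' n : ℕ, r ^ n := ENNReal.tsum_mul_left
          _ = K * (1 - r)⁻¹ := by rw [ENNReal.tsum_geometric]
      refine ne_top_of_le_ne_top ?_ hle
      refine ENNReal.mul_ne_top ENNReal.ofReal_ne_top ?_
      rw [ENNReal.inv_ne_top]
      exact (tsub_pos_of_lt hr).ne'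
    have := MeasureTheory.ae_eventually_notMem hsum
    filter_upwards [this] with ω hω
    filter_upwards [hω] with n hn
    exact hn
  have haeall : ∀ᵐ ω ∂ℙ, ∀ (M : ℕ) (j : ℕ), ∀ᶠ n : ℕ in atTop,
      ¬(|X 1 ω| ≤ (M : ℝ) ∧ rexp (n * (L + ((j : ℝ) + 1)⁻¹))
        ≤ (Zcount X n (x * Real.sqrt n) ω : ℝ)) :=
    ae_all_iff.mpr fun M => ae_all_iff.mpr fun j => hae M j
  filter_upwards [haeall] with ω hω
  refine ereal_le_of_forall_le_add fun j => ?_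
  set ε : ℝ := ((j : ℝ) + 1)⁻¹ with hεdef
  refine Filter.limsup_le_of_le (by isBoundedDefault) ?_
  have hM : |X 1 ω| ≤ (Nat.ceil |X 1 ω| : ℝ) := Nat.le_ceil _
  filter_upwards [hω (Nat.ceil |X 1 ω|) j, eventually_ge_atTop 1] with n hn hn1
  by_cases hz : Zcount X n (x * Real.sqrt n) ω = 0
  · rw [if_pos hz]
    exact bot_le
  · rw [if_neg hz]
    have hzlt : (Zcount X n (x * Real.sqrt n) ω : ℝ) < rexp (n * (L + ε)) := by
      by_contra hcon
      exact hn ⟨hM, le_of_not_gt hcon⟩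
    have hz1 : (1 : ℝ) ≤ (Zcount X n (x * Real.sqrt n) ω : ℝ) := by
      exact_mod_cast Nat.one_le_iff_ne_zero.mpr hz
    have hlog : Real.log (Zcount X n (x * Real.sqrt n) ω) ≤ n * (L + ε) := by
      calc Real.log (Zcount X n (x * Real.sqrt n) ω)
          ≤ Real.log (rexp (n * (L + ε))) :=
            Real.log_le_log (by linarith) hzlt.le
        _ = n * (L + ε) := Real.log_exp _
    have hnpos : (0 : ℝ) < n := by exact_mod_cast hn1
    rw [EReal.coe_le_coe_iff]
    rw [div_le_iff₀ hnpos]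
    calc Real.log (Zcount X n (x * Real.sqrt n) ω) ≤ n * (L + ε) := hlog
      _ = (L + ε) * n := by ring
end
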